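/- arXiv:1611.06325 — 4 statements merged into one kernel-verified Lean document; each statement's English description precedes it below -/
import Mathlib

section
/- Let Λ be a finite-dimensional algebra with subalgebras L, kG, R such that the product map L ⊗ kG ⊗ R → Λ is a bijection, A := L·kG and B := kG·R are subalgebras, L and R are augmented with nilpotent augmentation ideals L⁺, R⁺, and (kG)L⁺ = L⁺(kG), R⁺(kG) = (kG)R⁺. For λ, μ ∈ Ĝ, let k_A(λ) be the right A-module and k_B(μ) the left B-module obtained from the characters via A/(L⁺⊗kG) = kG = B/(kG⊗R⁺). Then k_A(λ) ⊗_A Λ ⊗_B k_B(μ) is one-dimensional if λ = μ and zero if λ ≠ μ. -/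
open TensorProduct
open scoped Classical

/-- The product map `L ⊗ kG → Λ`, `x ⊗ a ↦ x·ι(a)`. -/
noncomputable def prodLG (k G Λ : Type) [Field k] [CommGroup G] [Ring Λ] [Algebra k Λ]
    (ι : MonoidAlgebra k G →ₐ[k] Λ) (L : Subalgebra k Λ) :
    (L ⊗[k] MonoidAlgebra k G) →ₗ[k] Λ :=
  TensorProduct.lift
    (((LinearMap.mul k Λ).comp (Subalgebra.val L).toLinearMap).compl₂ ι.toLinearMap)

/-- The triple product map `L ⊗ kG ⊗ R → Λ`, `x ⊗ a ⊗ y ↦ x·ι(a)·y`. -/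
noncomputable def triProd (k G Λ : Type) [Field k] [CommGroup G] [Ring Λ] [Algebra k Λ]
    (ι : MonoidAlgebra k G →ₐ[k] Λ) (L R : Subalgebra k Λ) :
    ((L ⊗[k] MonoidAlgebra k G) ⊗[k] R) →ₗ[k] Λ :=
  TensorProduct.lift
    (((LinearMap.mul k Λ).comp (prodLG k G Λ ι L)).compl₂ (Subalgebra.val R).toLinearMap)

/-- The character functional `L ⊗ kG ⊗ R → k`, `x ⊗ a ⊗ y ↦ εL(x)·λ̂(a)·εR(y)`. -/
noncomputable def charFun (k G Λ : Type) [Field k] [CommGroup G] [Ring Λ] [Algebra k Λ]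
    (L R : Subalgebra k Λ) (εL : L →ₐ[k] k) (εR : R →ₐ[k] k)
    (lamh : MonoidAlgebra k G →ₐ[k] k) :
    ((L ⊗[k] MonoidAlgebra k G) ⊗[k] R) →ₗ[k] k :=
  TensorProduct.lift
    (((LinearMap.mul k k).comp
        (TensorProduct.lift
          (((LinearMap.mul k k).comp εL.toLinearMap).compl₂ lamh.toLinearMap))).compl₂
      εR.toLinearMap)

theorem triProd_tmul (k G Λ : Type) [Field k] [CommGroup G] [Ring Λ] [Algebra k Λ]
    (ι : MonoidAlgebra k G →ₐ[k] Λ) (L R : Subalgebra k Λ)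
    (x : L) (a : MonoidAlgebra k G) (y : R) :
    triProd k G Λ ι L R ((x ⊗ₜ a) ⊗ₜ y) = (x : Λ) * ι a * (y : Λ) := by
  simp [triProd, prodLG]

theorem charFun_tmul (k G Λ : Type) [Field k] [CommGroup G] [Ring Λ] [Algebra k Λ]
    (L R : Subalgebra k Λ) (εL : L →ₐ[k] k) (εR : R →ₐ[k] k)
    (lamh : MonoidAlgebra k G →ₐ[k] k)
    (x : L) (a : MonoidAlgebra k G) (y : R) :
    charFun k G Λ L R εL εR lamh ((x ⊗ₜ a) ⊗ₜ y) = εL x * lamh a * εR y := by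
  simp [charFun]

set_option maxHeartbeats 4000000 in
set_option synthInstance.maxHeartbeats 1000000 in
/-- Lemma 2.1: in a triangular decomposition `Λ = L ⊗ kG ⊗ R` with subalgebras
`A = L·kG`, `B = kG·R`, nilpotent augmentation ideals and permutability conditions, for
characters `λ, μ ∈ Ĝ` the space `k_A(λ) ⊗_A Λ ⊗_B k_B(μ)` — realized as the quotient of
`Λ` by `(ker χ_A^λ)Λ + Λ(ker χ_B^μ)` — is one-dimensional if `λ = μ` and zero otherwise. -/
theorem stmt4 (k G Λ : Type) [Field k] [CommGroup G] [Fintype G]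
    (hchar : (Fintype.card G : k) ≠ 0)
    (hroot : ∃ ζ : k, IsPrimitiveRoot ζ (Monoid.exponent G))
    [Ring Λ] [Algebra k Λ] [FiniteDimensional k Λ]
    (ι : MonoidAlgebra k G →ₐ[k] Λ) (hι : Function.Injective ι)
    (L R : Subalgebra k Λ)
    (hTri : Function.Bijective (triProd k G Λ ι L R))
    (A B : Subalgebra k Λ)
    (hA : Subalgebra.toSubmodule A =
      Subalgebra.toSubmodule L * Subalgebra.toSubmodule ι.range)
    (hB : Subalgebra.toSubmodule B =
      Subalgebra.toSubmodule ι.range * Subalgebra.toSubmodule R)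
    (εL : L →ₐ[k] k) (εR : R →ₐ[k] k)
    (hLnil : ∃ n : ℕ, (RingHom.ker εL.toRingHom) ^ n = ⊥)
    (hRnil : ∃ n : ℕ, (RingHom.ker εR.toRingHom) ^ n = ⊥)
    (hII_L : Subalgebra.toSubmodule ι.range *
        Submodule.map (Subalgebra.val L).toLinearMap
          ((RingHom.ker εL.toRingHom).restrictScalars k) =
      Submodule.map (Subalgebra.val L).toLinearMap
          ((RingHom.ker εL.toRingHom).restrictScalars k) *
        Subalgebra.toSubmodule ι.range)
    (hII_R : Submodule.map (Subalgebra.val R).toLinearMap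
          ((RingHom.ker εR.toRingHom).restrictScalars k) *
        Subalgebra.toSubmodule ι.range =
      Subalgebra.toSubmodule ι.range *
        Submodule.map (Subalgebra.val R).toLinearMap
          ((RingHom.ker εR.toRingHom).restrictScalars k))
    (lam mu : G →* kˣ)
    (χA : A →ₐ[k] k) (χB : B →ₐ[k] k)
    (hχA_G : ∀ (g : G) (hg : ι (MonoidAlgebra.of k G g) ∈ A),
      χA ⟨ι (MonoidAlgebra.of k G g), hg⟩ = lam g)
    (hχA_L : ∀ (x : L) (hx : (x : Λ) ∈ A), χA ⟨(x : Λ), hx⟩ = εL x)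
    (hχB_G : ∀ (g : G) (hg : ι (MonoidAlgebra.of k G g) ∈ B),
      χB ⟨ι (MonoidAlgebra.of k G g), hg⟩ = mu g)
    (hχB_R : ∀ (y : R) (hy : (y : Λ) ∈ B), χB ⟨(y : Λ), hy⟩ = εR y) :
    Module.finrank k
      (Λ ⧸ (Submodule.map (Subalgebra.val A).toLinearMap
              ((RingHom.ker χA.toRingHom).restrictScalars k) * ⊤ ⊔
            ⊤ * Submodule.map (Subalgebra.val B).toLinearMap
              ((RingHom.ker χB.toRingHom).restrictScalars k))) =
      if lam = mu then 1 else 0 := by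
  classical
  -- notation
  set LS := Subalgebra.toSubmodule L with hLS
  set RS := Subalgebra.toSubmodule R with hRS
  set GS := Subalgebra.toSubmodule ι.range with hGS
  set LP := Submodule.map (Subalgebra.val L).toLinearMap
      ((RingHom.ker εL.toRingHom).restrictScalars k) with hLP
  set RP := Submodule.map (Subalgebra.val R).toLinearMap
      ((RingHom.ker εR.toRingHom).restrictScalars k) with hRP
  set IA := Submodule.map (Subalgebra.val A).toLinearMap
      ((RingHom.ker χA.toRingHom).restrictScalars k) with hIA
  set IB := Submodule.map (Subalgebra.val B).toLinearMap
      ((RingHom.ker χB.toRingHom).restrictScalars k) with hIB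
  set J := IA * ⊤ ⊔ ⊤ * IB with hJ
  -- memberships
  have memL : ∀ x : L, (x : Λ) ∈ LS := fun x => x.2
  have memR : ∀ y : R, (y : Λ) ∈ RS := fun y => y.2
  have memG : ∀ a, ι a ∈ GS := fun a => ⟨a, rfl⟩
  have memLP : ∀ x : L, εL x = 0 → (x : Λ) ∈ LP := by
    intro x hx
    exact ⟨x, by simpa [RingHom.mem_ker] using hx, rfl⟩
  have memRP : ∀ y : R, εR y = 0 → (y : Λ) ∈ RP := by
    intro y hy
    exact ⟨y, by simpa [RingHom.mem_ker] using hy, rfl⟩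
  have memA_L : ∀ x : L, (x : Λ) ∈ A := by
    intro x
    rw [← Subalgebra.mem_toSubmodule, hA]
    simpa using Submodule.mul_mem_mul (memL x) (show (1:Λ) ∈ GS from ⟨1, map_one ι⟩)
  have memA_G : ∀ a, ι a ∈ A := by
    intro a
    rw [← Subalgebra.mem_toSubmodule, hA]
    simpa using Submodule.mul_mem_mul (show (1:Λ) ∈ LS from L.one_mem) (memG a)
  have memB_R : ∀ y : R, (y : Λ) ∈ B := by
    intro y
    rw [← Subalgebra.mem_toSubmodule, hB]
    simpa using Submodule.mul_mem_mul (show (1:Λ) ∈ GS from ⟨1, map_one ι⟩) (memR y)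
  have memB_G : ∀ a, ι a ∈ B := by
    intro a
    rw [← Subalgebra.mem_toSubmodule, hB]
    simpa using Submodule.mul_mem_mul (memG a) (show (1:Λ) ∈ RS from R.one_mem)
  -- the characters on the group algebra
  set lamh : MonoidAlgebra k G →ₐ[k] k :=
    MonoidAlgebra.lift k k G ((Units.coeHom k).comp lam) with hlamh
  have lamh_of : ∀ g : G, lamh (MonoidAlgebra.of k G g) = lam g := by
    intro g; simp [hlamh]
  set muh : MonoidAlgebra k G →ₐ[k] k :=
    MonoidAlgebra.lift k k G ((Units.coeHom k).comp mu) with hmuh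
  have muh_of : ∀ g : G, muh (MonoidAlgebra.of k G g) = mu g := by
    intro g; simp [hmuh]
  set ιA : MonoidAlgebra k G →ₐ[k] A := AlgHom.codRestrict ι A memA_G with hιA
  set ιB : MonoidAlgebra k G →ₐ[k] B := AlgHom.codRestrict ι B memB_G with hιB
  have χA_G : ∀ (a : MonoidAlgebra k G) (h : ι a ∈ A), χA ⟨ι a, h⟩ = lamh a := by
    have hcomp : χA.comp ιA = lamh := by
      refine MonoidAlgebra.algHom_ext ?_ (Subsingleton.elim _ _)
      intro g
      rw [← MonoidAlgebra.of_apply]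
      have h1 : (χA.comp ιA) (MonoidAlgebra.of k G g)
          = χA ⟨ι (MonoidAlgebra.of k G g), memA_G _⟩ := rfl
      rw [h1, hχA_G, lamh_of]
    intro a h
    have h2 : (⟨ι a, h⟩ : A) = ιA a := Subtype.ext rfl
    rw [h2, ← hcomp]; rfl
  have χB_G : ∀ (a : MonoidAlgebra k G) (h : ι a ∈ B), χB ⟨ι a, h⟩ = muh a := by
    have hcomp : χB.comp ιB = muh := by
      refine MonoidAlgebra.algHom_ext ?_ (Subsingleton.elim _ _)
      intro g
      rw [← MonoidAlgebra.of_apply]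
      have h1 : (χB.comp ιB) (MonoidAlgebra.of k G g)
          = χB ⟨ι (MonoidAlgebra.of k G g), memB_G _⟩ := rfl
      rw [h1, hχB_G, muh_of]
    intro a h
    have h2 : (⟨ι a, h⟩ : B) = ιB a := Subtype.ext rfl
    rw [h2, ← hcomp]; rfl
  have χA_mul : ∀ (x : L) (a : MonoidAlgebra k G) (h : (x : Λ) * ι a ∈ A),
      χA ⟨(x : Λ) * ι a, h⟩ = εL x * lamh a := by
    intro x a h
    have : (⟨(x : Λ) * ι a, h⟩ : A) = ⟨(x : Λ), memA_L x⟩ * ⟨ι a, memA_G a⟩ :=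
      Subtype.ext rfl
    rw [this, map_mul, hχA_L, χA_G]
  have χB_mul : ∀ (a : MonoidAlgebra k G) (y : R) (h : ι a * (y : Λ) ∈ B),
      χB ⟨ι a * (y : Λ), h⟩ = muh a * εR y := by
    intro a y h
    have : (⟨ι a * (y : Λ), h⟩ : B) = ⟨ι a, memB_G a⟩ * ⟨(y : Λ), memB_R y⟩ :=
      Subtype.ext rfl
    rw [this, map_mul, hχB_R, χB_G]
  -- the triangular decomposition as an equivalence, and the functional φ
  set T := LinearEquiv.ofBijective (triProd k G Λ ι L R) hTri with hT
  set φ : Λ →ₗ[k] k :=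
    (charFun k G Λ L R εL εR lamh) ∘ₗ (T.symm : Λ →ₗ[k] (L ⊗[k] MonoidAlgebra k G) ⊗[k] R)
      with hφ
  have key : ∀ (x : L) (a : MonoidAlgebra k G) (y : R),
      φ ((x : Λ) * ι a * (y : Λ)) = εL x * lamh a * εR y := by
    intro x a y
    have h1 : (x : Λ) * ι a * (y : Λ) = T ((x ⊗ₜ a) ⊗ₜ y) := by
      rw [hT, LinearEquiv.ofBijective_apply, triProd_tmul]
    rw [h1, hφ]
    simp only [LinearMap.coe_comp, Function.comp_apply, LinearEquiv.coe_coe,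
      LinearEquiv.symm_apply_apply]
    exact charFun_tmul k G Λ L R εL εR lamh x a y
  have φ1 : φ 1 = 1 := by
    have := key 1 1 1
    simpa using this
  -- total space decomposition
  have ht : LS * GS * RS = ⊤ := by
    rw [eq_top_iff]
    rintro z -
    obtain ⟨t, rfl⟩ := hTri.2 z
    induction t using TensorProduct.induction_on with
    | zero => rw [map_zero]; exact zero_mem _
    | tmul u y =>
      induction u using TensorProduct.induction_on with
      | zero => rw [TensorProduct.zero_tmul, map_zero]; exact zero_mem _
      | tmul x a =>
        rw [triProd_tmul]
        exact Submodule.mul_mem_mul (Submodule.mul_mem_mul (memL x) (memG a)) (memR y)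
      | add u1 u2 h1 h2 =>
        rw [TensorProduct.add_tmul, map_add]
        exact add_mem h1 h2
    | add t1 t2 h1 h2 =>
      rw [map_add]; exact add_mem h1 h2
  -- vanishing lemmas
  have hLPL : LP * LS ≤ LP := by
    rw [Submodule.mul_le]
    rintro m ⟨u, hu, rfl⟩ n hn
    have hu' : εL u = 0 := by simpa [RingHom.mem_ker] using hu
    exact ⟨u * ⟨n, hn⟩, by simp [RingHom.mem_ker, map_mul, hu'], rfl⟩
  have hRRP : RS * RP ≤ RP := by
    rw [Submodule.mul_le]
    rintro n hn m ⟨u, hu, rfl⟩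
    have hu' : εR u = 0 := by simpa [RingHom.mem_ker] using hu
    exact ⟨⟨n, hn⟩ * u, by simp [RingHom.mem_ker, map_mul, hu'], rfl⟩
  have V1 : LP * ⊤ ≤ LinearMap.ker φ := by
    have h1 : (LP * GS) * RS ≤ LinearMap.ker φ := by
      rw [Submodule.mul_le]
      intro w hw n hn
      refine Submodule.mul_induction_on (C := fun w => w * n ∈ LinearMap.ker φ) hw ?_ ?_
      · rintro m ⟨u, hu, rfl⟩ g ⟨a, rfl⟩
        have hu' : εL u = 0 := by simpa [RingHom.mem_ker] using hu
        have hk := key u a ⟨n, hn⟩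
        rw [hu', zero_mul, zero_mul] at hk
        exact LinearMap.mem_ker.mpr hk
      · intro w1 w2 h1 h2
        rw [add_mul]; exact add_mem h1 h2
    calc LP * ⊤ = LP * (LS * GS * RS) := by rw [ht]
      _ = ((LP * LS) * GS) * RS := by rw [← mul_assoc, ← mul_assoc]
      _ ≤ (LP * GS) * RS :=
        mul_le_mul' (mul_le_mul' hLPL le_rfl) le_rfl
      _ ≤ LinearMap.ker φ := h1
  have V2 : ⊤ * RP ≤ LinearMap.ker φ := by
    have h1 : (LS * GS) * RP ≤ LinearMap.ker φ := by
      rw [Submodule.mul_le]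
      intro w hw n hn
      obtain ⟨u, hu, rfl⟩ := hn
      have hu' : εR u = 0 := by simpa [RingHom.mem_ker] using hu
      refine Submodule.mul_induction_on
        (C := fun w => w * (R.val.toLinearMap u) ∈ LinearMap.ker φ) hw ?_ ?_
      · rintro m hm g ⟨a, rfl⟩
        have hk := key ⟨m, hm⟩ a u
        rw [hu', mul_zero] at hk
        exact LinearMap.mem_ker.mpr hk
      · intro w1 w2 h1 h2
        rw [add_mul]; exact add_mem h1 h2
    calc ⊤ * RP = ((LS * GS) * RS) * RP := by rw [ht]
      _ = (LS * GS) * (RS * RP) := by rw [mul_assoc]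
      _ ≤ (LS * GS) * RP := mul_le_mul' le_rfl hRRP
      _ ≤ LinearMap.ker φ := h1
  -- decomposition helpers
  have hxdec : ∀ (x : L) (w : Λ), (x : Λ) * w = ((x - εL x • 1 : L) : Λ) * w + εL x • w := by
    intro x w
    push_cast
    rw [sub_mul, smul_mul_assoc, one_mul, sub_add_cancel]
  have hxeps : ∀ x : L, εL (x - εL x • 1) = 0 := by
    intro x; simp [smul_eq_mul]
  have hydec : ∀ (y : R) (w : Λ), w * (y : Λ) = w * ((y - εR y • 1 : R) : Λ) + εR y • w := by
    intro y w
    push_cast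
    rw [mul_sub, mul_smul_comm, mul_one, sub_add_cancel]
  have hyeps : ∀ y : R, εR (y - εR y • 1) = 0 := by
    intro y; simp [smul_eq_mul]
  -- left action formula
  have main_i : ∀ (a : MonoidAlgebra k G) (w : Λ), φ (ι a * w) = lamh a * φ w := by
    have hg : ∀ (g : G) (w : Λ),
        φ (ι (MonoidAlgebra.of k G g) * w) = (lam g : k) * φ w := by
      intro g w
      obtain ⟨t, rfl⟩ := hTri.2 w
      induction t using TensorProduct.induction_on with
      | zero => rw [map_zero, mul_zero, map_zero, mul_zero]
      | add t1 t2 h1 h2 => simp only [map_add, mul_add, h1, h2]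
      | tmul u y =>
        induction u using TensorProduct.induction_on with
        | zero => rw [TensorProduct.zero_tmul, map_zero, mul_zero, map_zero, mul_zero]
        | add u1 u2 h1 h2 =>
          simp only [TensorProduct.add_tmul, map_add, mul_add, h1, h2]
        | tmul x a =>
          rw [triProd_tmul]
          set xp : L := x - εL x • 1 with hxp
          have hc : (x : Λ) = (xp : Λ) + εL x • 1 := by rw [hxp]; push_cast; module
          have e1 : ι (MonoidAlgebra.of k G g) * ((x : Λ) * ι a * (y : Λ))
              = (ι (MonoidAlgebra.of k G g) * (xp : Λ)) * (ι a * (y : Λ))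
                + εL x • (((1 : L) : Λ) * ι (MonoidAlgebra.of k G g * a) * (y : Λ)) := by
            rw [hc]
            simp only [map_mul, add_mul, smul_mul_assoc, mul_add, mul_smul_comm, one_mul,
              mul_assoc, OneMemClass.coe_one]
          have hmem : (ι (MonoidAlgebra.of k G g) * (xp : Λ)) * (ι a * (y : Λ)) ∈ LP * ⊤ := by
            have h2 : ι (MonoidAlgebra.of k G g) * (xp : Λ) ∈ LP * GS := by
              rw [← hII_L]
              exact Submodule.mul_mem_mul (memG _) (memLP xp (hxeps x))
            have h3 : (LP * GS) * ⊤ ≤ LP * ⊤ := by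
              rw [mul_assoc]; exact mul_le_mul' le_rfl le_top
            exact h3 (Submodule.mul_mem_mul h2 Submodule.mem_top)
          have h0 : φ ((ι (MonoidAlgebra.of k G g) * (xp : Λ)) * (ι a * (y : Λ))) = 0 :=
            V1 hmem
          rw [e1, map_add, map_smul, h0, key 1 _ y, key x a y, zero_add]
          simp only [map_one, map_mul, lamh_of, smul_eq_mul, one_mul]
          ring
    intro a w
    induction a using MonoidAlgebra.induction_on with
    | of g => rw [hg g w, lamh_of]
    | add f1 f2 h1 h2 =>
      simp only [map_add, add_mul, h1, h2]
    | smul r f h =>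
      simp only [map_smul, smul_mul_assoc, smul_eq_mul, mul_assoc, h]
  have MA : ∀ w : Λ, ∀ u : Λ, u ∈ Subalgebra.toSubmodule A →
      ∃ hu : u ∈ A, φ (u * w) = χA ⟨u, hu⟩ * φ w := by
    intro w u hu
    rw [hA] at hu
    refine Submodule.mul_induction_on
      (C := fun u => ∃ hu : u ∈ A, φ (u * w) = χA ⟨u, hu⟩ * φ w) hu ?_ ?_
    · rintro m hm g hg
      obtain ⟨a, rfl⟩ : ∃ a, ι a = g := hg
      obtain ⟨x, rfl⟩ : ∃ x : L, (x : Λ) = m := ⟨⟨m, hm⟩, rfl⟩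
      refine ⟨A.mul_mem (memA_L x) (memA_G a), ?_⟩
      rw [χA_mul x a]
      rw [mul_assoc, hxdec x (ι a * w), map_add, map_smul]
      have h0 : φ (((x - εL x • 1 : L) : Λ) * (ι a * w)) = 0 := by
        have hmm : ((x - εL x • 1 : L) : Λ) * (ι a * w) ∈ LP * ⊤ :=
          Submodule.mul_mem_mul (memLP _ (hxeps x)) Submodule.mem_top
        exact LinearMap.mem_ker.mp (V1 hmm)
      rw [h0, zero_add, main_i a w, smul_eq_mul, mul_assoc]
    · rintro u v ⟨hu, hu'⟩ ⟨hv, hv'⟩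
      refine ⟨A.add_mem hu hv, ?_⟩
      have hmk : (⟨u + v, A.add_mem hu hv⟩ : A) = ⟨u, hu⟩ + ⟨v, hv⟩ := rfl
      simp only [hmk, map_add, add_mul, hu', hv']
  have hIAker : IA * ⊤ ≤ LinearMap.ker φ := by
    rw [Submodule.mul_le]
    rintro m ⟨z, hz, rfl⟩ w -
    have hz' : χA z = 0 := by simpa [RingHom.mem_ker] using hz
    obtain ⟨hu, he⟩ := MA w (z : Λ) z.2
    have hmk : (⟨(z : Λ), hu⟩ : A) = z := Subtype.ext rfl
    rw [hmk, hz', zero_mul] at he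
    exact LinearMap.mem_ker.mpr he
  -- span lemma: Λ = J + k·1
  have hS : ∀ z : Λ, z ∈ J ⊔ Submodule.span k {(1 : Λ)} := by
    set S := J ⊔ Submodule.span k {(1 : Λ)} with hSdef
    have hJS : J ≤ S := le_sup_left
    have h1S : ∀ c : k, c • (1 : Λ) ∈ S := fun c =>
      (le_sup_right : _ ≤ S)
        (Submodule.smul_mem _ c (Submodule.mem_span_singleton_self 1))
    have sIA : ∀ z : A, χA z = 0 → (z : Λ) ∈ J := by
      intro z hz
      have h1 : (z : Λ) ∈ IA := ⟨z, by simpa [RingHom.mem_ker] using hz, rfl⟩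
      have h2 : (z : Λ) * 1 ∈ IA * ⊤ := Submodule.mul_mem_mul h1 Submodule.mem_top
      rw [mul_one] at h2
      exact (le_sup_left : _ ≤ J) h2
    have sIB : ∀ z : B, χB z = 0 → ∀ w : Λ, w * (z : Λ) ∈ J := by
      intro z hz w
      have h1 : (z : Λ) ∈ IB := ⟨z, by simpa [RingHom.mem_ker] using hz, rfl⟩
      exact (le_sup_right : _ ≤ J) (Submodule.mul_mem_mul Submodule.mem_top h1)
    have sG : ∀ a, ι a ∈ S := by
      intro a
      have hz : χA (ιA a - lamh a • 1) = 0 := by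
        rw [map_sub, map_smul, map_one, smul_eq_mul, mul_one,
          show χA (ιA a) = lamh a from χA_G a (memA_G a), sub_self]
      have h1 : ((ιA a - lamh a • 1 : A) : Λ) ∈ J := sIA _ hz
      have h2 : ι a = ((ιA a - lamh a • 1 : A) : Λ) + lamh a • 1 := by
        push_cast
        have : ((ιA a : A) : Λ) = ι a := rfl
        rw [this]; module
      rw [h2]
      exact S.add_mem (hJS h1) (h1S _)
    have sGR : ∀ a (y : R), ι a * (y : Λ) ∈ S := by
      intro a y
      have hz : χB ⟨((y - εR y • 1 : R) : Λ), memB_R _⟩ = 0 := by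
        rw [hχB_R]; exact hyeps y
      have h1 : ι a * ((y - εR y • 1 : R) : Λ) ∈ J :=
        sIB ⟨_, memB_R _⟩ hz (ι a)
      rw [hydec y (ι a)]
      exact S.add_mem (hJS h1) (Submodule.smul_mem S _ (sG a))
    have sLGR : ∀ (x : L) a (y : R), (x : Λ) * (ι a * (y : Λ)) ∈ S := by
      intro x a y
      have hz : χA ⟨((x - εL x • 1 : L) : Λ), memA_L _⟩ = 0 := by
        rw [hχA_L]; exact hxeps x
      have h1 : ((x - εL x • 1 : L) : Λ) * (ι a * (y : Λ)) ∈ J := by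
        refine (le_sup_left : _ ≤ J) (Submodule.mul_mem_mul ?_ Submodule.mem_top)
        refine ⟨⟨((x - εL x • 1 : L) : Λ), memA_L _⟩, ?_, rfl⟩
        simpa [RingHom.mem_ker] using hz
      rw [hxdec x (ι a * (y : Λ))]
      exact S.add_mem (hJS h1) (Submodule.smul_mem S _ (sGR a y))
    intro z
    obtain ⟨t, rfl⟩ := hTri.2 z
    induction t using TensorProduct.induction_on with
    | zero => rw [map_zero]; exact S.zero_mem
    | add t1 t2 h1 h2 => rw [map_add]; exact S.add_mem h1 h2
    | tmul u y =>
      induction u using TensorProduct.induction_on with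
      | zero => rw [TensorProduct.zero_tmul, map_zero]; exact S.zero_mem
      | add u1 u2 h1 h2 => rw [TensorProduct.add_tmul, map_add]; exact S.add_mem h1 h2
      | tmul x a => rw [triProd_tmul, mul_assoc]; exact sLGR x a y
  by_cases hlm : lam = mu
  · subst hlm
    rw [if_pos rfl]
    -- right action formula (needs lam = mu)
    have muh_eq : muh = lamh := by rw [hmuh, hlamh]
    have main_i' : ∀ (a : MonoidAlgebra k G) (w : Λ), φ (w * ι a) = φ w * lamh a := by
      have hg' : ∀ (g : G) (w : Λ),
          φ (w * ι (MonoidAlgebra.of k G g)) = φ w * (lam g : k) := by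
        intro g w
        obtain ⟨t, rfl⟩ := hTri.2 w
        induction t using TensorProduct.induction_on with
        | zero => rw [map_zero, zero_mul, map_zero, zero_mul]
        | add t1 t2 h1 h2 => simp only [map_add, add_mul, h1, h2]
        | tmul u y =>
          induction u using TensorProduct.induction_on with
          | zero => rw [TensorProduct.zero_tmul, map_zero, zero_mul, map_zero, zero_mul]
          | add u1 u2 h1 h2 => simp only [TensorProduct.add_tmul, map_add, add_mul, h1, h2]
          | tmul x a =>
            rw [triProd_tmul]
            set yp : R := y - εR y • 1 with hyp
            have e1 : ((x : Λ) * ι a * (y : Λ)) * ι (MonoidAlgebra.of k G g)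
                = ((x : Λ) * ι a) * ((yp : Λ) * ι (MonoidAlgebra.of k G g))
                  + εR y • ((x : Λ) * ι (a * MonoidAlgebra.of k G g) * ((1 : R) : Λ)) := by
              rw [show (y : Λ) = (yp : Λ) + εR y • 1 from by rw [hyp]; push_cast; module]
              simp only [map_mul, mul_add, add_mul, smul_mul_assoc, mul_smul_comm, mul_one,
                one_mul, OneMemClass.coe_one, mul_assoc]
            have hmem : ((x : Λ) * ι a) * ((yp : Λ) * ι (MonoidAlgebra.of k G g)) ∈ ⊤ * RP := by
              have h2 : (yp : Λ) * ι (MonoidAlgebra.of k G g) ∈ GS * RP := by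
                rw [← hII_R]
                exact Submodule.mul_mem_mul (memRP yp (hyeps y)) (memG _)
              have h3 : ⊤ * (GS * RP) ≤ ⊤ * RP := by
                rw [← mul_assoc]; exact mul_le_mul' le_top le_rfl
              exact h3 (Submodule.mul_mem_mul Submodule.mem_top h2)
            have h0 : φ (((x : Λ) * ι a) * ((yp : Λ) * ι (MonoidAlgebra.of k G g))) = 0 :=
              LinearMap.mem_ker.mp (V2 hmem)
            rw [e1, map_add, map_smul, h0, zero_add, key x (a * MonoidAlgebra.of k G g) 1,
              key x a y]
            simp only [map_mul, map_one, lamh_of, smul_eq_mul, mul_one]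
            ring
      intro a w
      induction a using MonoidAlgebra.induction_on with
      | of g => rw [hg' g w, lamh_of]
      | add f1 f2 h1 h2 => simp only [map_add, mul_add, h1, h2]
      | smul r f h =>
        simp only [map_smul, mul_smul_comm, smul_eq_mul, h]
        ring
    have MB : ∀ w : Λ, ∀ u : Λ, u ∈ Subalgebra.toSubmodule B →
        ∃ hu : u ∈ B, φ (w * u) = φ w * χB ⟨u, hu⟩ := by
      intro w u hu
      rw [hB] at hu
      refine Submodule.mul_induction_on
        (C := fun u => ∃ hu : u ∈ B, φ (w * u) = φ w * χB ⟨u, hu⟩) hu ?_ ?_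
      · rintro g hg n hn
        obtain ⟨a, rfl⟩ : ∃ a, ι a = g := hg
        obtain ⟨y, rfl⟩ : ∃ y : R, (y : Λ) = n := ⟨⟨n, hn⟩, rfl⟩
        refine ⟨B.mul_mem (memB_G a) (memB_R y), ?_⟩
        rw [χB_mul a y, muh_eq]
        rw [← mul_assoc, hydec y (w * ι a), map_add, map_smul]
        have h0 : φ ((w * ι a) * ((y - εR y • 1 : R) : Λ)) = 0 := by
          have hmm : (w * ι a) * ((y - εR y • 1 : R) : Λ) ∈ ⊤ * RP :=
            Submodule.mul_mem_mul Submodule.mem_top (memRP _ (hyeps y))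
          exact LinearMap.mem_ker.mp (V2 hmm)
        rw [h0, zero_add, main_i' a w, smul_eq_mul]
        ring
      · rintro u v ⟨hu, hu'⟩ ⟨hv, hv'⟩
        refine ⟨B.add_mem hu hv, ?_⟩
        have hmk : (⟨u + v, B.add_mem hu hv⟩ : B) = ⟨u, hu⟩ + ⟨v, hv⟩ := rfl
        simp only [hmk, map_add, mul_add, hu', hv']
    have hIBker : ⊤ * IB ≤ LinearMap.ker φ := by
      rw [Submodule.mul_le]
      rintro w - m ⟨z, hz, rfl⟩
      have hz' : χB z = 0 := by simpa [RingHom.mem_ker] using hz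
      obtain ⟨hu, he⟩ := MB w (z : Λ) z.2
      have hmk : (⟨(z : Λ), hu⟩ : B) = z := Subtype.ext rfl
      rw [hmk, hz', mul_zero] at he
      exact LinearMap.mem_ker.mpr he
    have hJker : J ≤ LinearMap.ker φ := sup_le hIAker hIBker
    set φb := J.liftQ φ hJker with hφb
    have hsurj : Function.Surjective φb := by
      intro c
      refine ⟨Submodule.Quotient.mk (c • (1 : Λ)), ?_⟩
      rw [hφb, Submodule.liftQ_apply, map_smul, φ1, smul_eq_mul, mul_one]
    have hinj : Function.Injective φb := by
      rw [injective_iff_map_eq_zero]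
      intro q hq
      obtain ⟨z, rfl⟩ := Submodule.Quotient.mk_surjective J q
      obtain ⟨j, hj, s, hs, hzs⟩ := Submodule.mem_sup.mp (hS z)
      obtain ⟨c, rfl⟩ := Submodule.mem_span_singleton.mp hs
      rw [hφb, Submodule.liftQ_apply] at hq
      rw [← hzs, map_add, map_smul, φ1, LinearMap.mem_ker.mp (hJker hj), zero_add,
        smul_eq_mul, mul_one] at hq
      subst hq
      rw [← hzs]
      simp only [zero_smul, add_zero]
      exact (Submodule.Quotient.mk_eq_zero J).mpr hj
    exact (LinearEquiv.ofBijective φb ⟨hinj, hsurj⟩).finrank_eq.trans (Module.finrank_self k)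
  · rw [if_neg hlm]
    obtain ⟨g, hg⟩ : ∃ g, lam g ≠ mu g := by
      by_contra h
      push_neg at h
      exact hlm (MonoidHom.ext h)
    have hc : ((mu g : k) - (lam g : k)) ≠ 0 :=
      sub_ne_zero.mpr fun e => hg (Units.ext e.symm)
    have h1A : (ι (MonoidAlgebra.of k G g) - (lam g : k) • 1) ∈ J := by
      have hz : χA (ιA (MonoidAlgebra.of k G g) - (lam g : k) • 1) = 0 := by
        rw [map_sub, map_smul, map_one, smul_eq_mul, mul_one,
          show χA (ιA (MonoidAlgebra.of k G g)) = (lam g : k) from hχA_G g (memA_G _),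
          sub_self]
      have hIA1 : ((ιA (MonoidAlgebra.of k G g) - (lam g : k) • 1 : A) : Λ) ∈ IA :=
        ⟨ιA (MonoidAlgebra.of k G g) - (lam g : k) • 1,
          by simpa [RingHom.mem_ker] using hz, rfl⟩
      have h2 := Submodule.mul_mem_mul hIA1 (Submodule.mem_top (x := (1 : Λ)))
      rw [mul_one] at h2
      have h3 : ((ιA (MonoidAlgebra.of k G g) - (lam g : k) • 1 : A) : Λ)
          = ι (MonoidAlgebra.of k G g) - (lam g : k) • 1 := by
        push_cast
        rw [show ((ιA (MonoidAlgebra.of k G g) : A) : Λ) = ι (MonoidAlgebra.of k G g) from rfl]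
      rw [h3] at h2
      exact (le_sup_left : _ ≤ J) h2
    have h1B : (ι (MonoidAlgebra.of k G g) - (mu g : k) • 1) ∈ J := by
      have hz : χB (ιB (MonoidAlgebra.of k G g) - (mu g : k) • 1) = 0 := by
        rw [map_sub, map_smul, map_one, smul_eq_mul, mul_one,
          show χB (ιB (MonoidAlgebra.of k G g)) = (mu g : k) from hχB_G g (memB_G _),
          sub_self]
      have hIB1 : ((ιB (MonoidAlgebra.of k G g) - (mu g : k) • 1 : B) : Λ) ∈ IB :=
        ⟨ιB (MonoidAlgebra.of k G g) - (mu g : k) • 1,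
          by simpa [RingHom.mem_ker] using hz, rfl⟩
      have h2 := Submodule.mul_mem_mul (Submodule.mem_top (x := (1 : Λ))) hIB1
      rw [one_mul] at h2
      have h3 : ((ιB (MonoidAlgebra.of k G g) - (mu g : k) • 1 : B) : Λ)
          = ι (MonoidAlgebra.of k G g) - (mu g : k) • 1 := by
        push_cast
        rw [show ((ιB (MonoidAlgebra.of k G g) : B) : Λ) = ι (MonoidAlgebra.of k G g) from rfl]
      rw [h3] at h2
      exact (le_sup_right : _ ≤ J) h2
    have h1J : (1 : Λ) ∈ J := by
      have hsub := J.sub_mem h1A h1B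
      have heq : (ι (MonoidAlgebra.of k G g) - (lam g : k) • 1)
          - (ι (MonoidAlgebra.of k G g) - (mu g : k) • 1)
          = ((mu g : k) - (lam g : k)) • (1 : Λ) := by module
      rw [heq] at hsub
      have hs2 := J.smul_mem ((mu g : k) - (lam g : k))⁻¹ hsub
      rwa [smul_smul, inv_mul_cancel₀ hc, one_smul] at hs2
    have hJtop : J = ⊤ := by
      rw [eq_top_iff]
      intro z _
      exact (sup_le le_rfl
        (Submodule.span_le.mpr (Set.singleton_subset_iff.mpr h1J))) (hS z)
    haveI : Subsingleton (Λ ⧸ J) := Submodule.Quotient.subsingleton_iff.mpr hJtop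
    exact Module.finrank_zero_of_subsingleton
end

section
/- In the triangular decomposition setting, for each λ ∈ Ĝ the Verma-type module M(λ) = Λ ⊗_B k_B(λ) has a unique largest proper Λ-submodule I(λ); consequently M(λ) has a unique simple quotient L(λ). -/
open TensorProduct

set_option maxHeartbeats 1000000 in
/-- In the triangular decomposition setting, for each `λ ∈ Ĝ` the Verma-type module
`M(λ) = Λ ⊗_B k_B(λ)` — realized as `Λ/Λ·ker χ_B^λ` — has a unique largest proper
`Λ`-submodule `I(λ)`; consequently `M(λ)` has a unique simple quotient `L(λ)`. -/
theorem stmt6 (k G Λ : Type) [Field k] [CommGroup G] [Fintype G]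
    (hchar : (Fintype.card G : k) ≠ 0)
    (hroot : ∃ ζ : k, IsPrimitiveRoot ζ (Monoid.exponent G))
    [Ring Λ] [Algebra k Λ] [FiniteDimensional k Λ]
    (ι : MonoidAlgebra k G →ₐ[k] Λ) (hι : Function.Injective ι)
    (L R : Subalgebra k Λ)
    (hTri : Function.Bijective (triProd k G Λ ι L R))
    (A B : Subalgebra k Λ)
    (hA : Subalgebra.toSubmodule A =
      Subalgebra.toSubmodule L * Subalgebra.toSubmodule ι.range)
    (hB : Subalgebra.toSubmodule B =
      Subalgebra.toSubmodule ι.range * Subalgebra.toSubmodule R)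
    (εL : L →ₐ[k] k) (εR : R →ₐ[k] k)
    (hLnil : ∃ n : ℕ, (RingHom.ker εL.toRingHom) ^ n = ⊥)
    (hRnil : ∃ n : ℕ, (RingHom.ker εR.toRingHom) ^ n = ⊥)
    (hII_L : Subalgebra.toSubmodule ι.range *
        Submodule.map (Subalgebra.val L).toLinearMap
          ((RingHom.ker εL.toRingHom).restrictScalars k) =
      Submodule.map (Subalgebra.val L).toLinearMap
          ((RingHom.ker εL.toRingHom).restrictScalars k) *
        Subalgebra.toSubmodule ι.range)
    (hII_R : Submodule.map (Subalgebra.val R).toLinearMap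
          ((RingHom.ker εR.toRingHom).restrictScalars k) *
        Subalgebra.toSubmodule ι.range =
      Subalgebra.toSubmodule ι.range *
        Submodule.map (Subalgebra.val R).toLinearMap
          ((RingHom.ker εR.toRingHom).restrictScalars k))
    (lam : G →* kˣ)
    (χB : B →ₐ[k] k)
    (hχB_G : ∀ (g : G) (hg : ι (MonoidAlgebra.of k G g) ∈ B),
      χB ⟨ι (MonoidAlgebra.of k G g), hg⟩ = lam g)
    (hχB_R : ∀ (y : R) (hy : (y : Λ) ∈ B), χB ⟨(y : Λ), hy⟩ = εR y) :
    ∃ Imax : Submodule Λ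
        (Λ ⧸ Ideal.span ((Subalgebra.val B) '' (RingHom.ker χB.toRingHom : Set B))),
      Imax ≠ ⊤ ∧
      (∀ N : Submodule Λ
          (Λ ⧸ Ideal.span ((Subalgebra.val B) '' (RingHom.ker χB.toRingHom : Set B))),
        N ≠ ⊤ → N ≤ Imax) ∧
      IsSimpleModule Λ
        ((Λ ⧸ Ideal.span ((Subalgebra.val B) '' (RingHom.ker χB.toRingHom : Set B)))
          ⧸ Imax) := by
  classical
  set S : Set Λ := (Subalgebra.val B) '' (RingHom.ker χB.toRingHom : Set B) with hS
  set J : Ideal Λ := Ideal.span S with hJdef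
  -- the character of kG induced by lam
  set lam' : G →* k := (Units.coeHom k).comp lam with hlam'
  set lamHat : MonoidAlgebra k G →ₐ[k] k := MonoidAlgebra.lift k k G lam' with hlamHat
  -- submodule abbreviations
  set 𝕃 : Submodule k Λ := Subalgebra.toSubmodule L with h𝕃
  set 𝔾 : Submodule k Λ := Subalgebra.toSubmodule ι.range with h𝔾
  set ℝ' : Submodule k Λ := Subalgebra.toSubmodule R with hℝ
  set 𝔹 : Submodule k Λ := Subalgebra.toSubmodule B with h𝔹
  -- ι lands in B
  have hmemB : ∀ a : MonoidAlgebra k G, ι a ∈ B := by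
    intro a
    have h1 : ι a ∈ 𝔾 * ℝ' := by
      have := Submodule.mul_mem_mul (M := 𝔾) (N := ℝ')
        ((Subalgebra.mem_toSubmodule _).mpr ⟨a, rfl⟩)
        ((Subalgebra.mem_toSubmodule _).mpr (one_mem R))
      simpa using this
    rw [← hB] at h1
    exact h1
  have hmemRB : ∀ y : R, (y : Λ) ∈ B := by
    intro y
    have h1 : (y : Λ) ∈ 𝔾 * ℝ' := by
      have := Submodule.mul_mem_mul (M := 𝔾) (N := ℝ')
        ((Subalgebra.mem_toSubmodule _).mpr ⟨1, map_one ι⟩)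
        ((Subalgebra.mem_toSubmodule _).mpr y.2)
      simpa using this
    rw [← hB] at h1
    exact h1
  -- χB restricted to the image of ι is lamHat
  have hχι : ∀ (a : MonoidAlgebra k G) (h : ι a ∈ B), χB ⟨ι a, h⟩ = lamHat a := by
    have key : χB.comp (ι.codRestrict B hmemB) = lamHat := by
      apply MonoidAlgebra.algHom_ext
      intro g
      have h1 : (χB.comp (ι.codRestrict B hmemB)) (MonoidAlgebra.single g 1)
          = χB ⟨ι (MonoidAlgebra.of k G g), hmemB _⟩ := rfl
      rw [h1, hχB_G g (hmemB _)]
      simp [hlamHat, hlam']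
      exact Subsingleton.elim _ _
    intro a h
    have := congrArg (fun f => f a) key
    exact this
  -- the functional φ
  set e : ((L ⊗[k] MonoidAlgebra k G) ⊗[k] R) ≃ₗ[k] Λ :=
    LinearEquiv.ofBijective _ hTri with he
  set ψ1 : (L ⊗[k] MonoidAlgebra k G) →ₗ[k] k :=
    TensorProduct.lift (((LinearMap.mul k k).comp εL.toLinearMap).compl₂ lamHat.toLinearMap)
      with hψ1
  set ψ : ((L ⊗[k] MonoidAlgebra k G) ⊗[k] R) →ₗ[k] k :=
    TensorProduct.lift (((LinearMap.mul k k).comp ψ1).compl₂ εR.toLinearMap) with hψ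
  set φ : Λ →ₗ[k] k := ψ ∘ₗ (e.symm : Λ →ₗ[k] ((L ⊗[k] MonoidAlgebra k G) ⊗[k] R)) with hφ
  have htri_apply : ∀ (x : L) (a : MonoidAlgebra k G) (y : R),
      triProd k G Λ ι L R ((x ⊗ₜ a) ⊗ₜ y) = (x : Λ) * ι a * (y : Λ) := by
    intro x a y
    simp [triProd, prodLG]
  have hφ_tri : ∀ (x : L) (a : MonoidAlgebra k G) (y : R),
      φ ((x : Λ) * ι a * (y : Λ)) = εL x * lamHat a * εR y := by
    intro x a y
    rw [← htri_apply]
    have h2 : triProd k G Λ ι L R ((x ⊗ₜ a) ⊗ₜ y) = e ((x ⊗ₜ a) ⊗ₜ y) := rfl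
    rw [h2]
    simp only [hφ, LinearMap.comp_apply, LinearEquiv.coe_coe, e.symm_apply_apply]
    simp [hψ, hψ1, mul_assoc]
  -- φ (x * b) = εL x * χB b
  have hBmem : ∀ {r : Λ}, r ∈ 𝔾 * ℝ' → r ∈ B := by
    intro r hr
    rw [← hB] at hr
    exact hr
  have hφ_b : ∀ (x : L) (b : Λ) (hb : b ∈ B), φ ((x : Λ) * b) = εL x * χB ⟨b, hb⟩ := by
    intro x b hb
    have hb' : b ∈ 𝔾 * ℝ' := by rw [← hB]; exact hb
    have main : ∀ (r : Λ) (hr : r ∈ 𝔾 * ℝ'),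
        φ ((x : Λ) * r) = εL x * χB ⟨r, hBmem hr⟩ := by
      intro r hr
      induction hr using Submodule.mul_induction_on' with
      | mem_mul_mem m hm n hn =>
          obtain ⟨a, rfl⟩ : ∃ a, ι a = m := (Subalgebra.mem_toSubmodule _).mp hm
          have hnR : n ∈ R := (Subalgebra.mem_toSubmodule _).mp hn
          have hsplit : χB ⟨ι a * n, hBmem (Submodule.mul_mem_mul hm hn)⟩
              = χB ⟨ι a, hmemB a⟩ * χB ⟨n, hmemRB ⟨n, hnR⟩⟩ := by
            rw [← map_mul]
            congr 1
          rw [hsplit, hχι a (hmemB a), hχB_R ⟨n, hnR⟩ (hmemRB ⟨n, hnR⟩)]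
          rw [← mul_assoc ((x : Λ)) (ι a) n]
          exact (hφ_tri x a ⟨n, hnR⟩).trans (by ring)
      | add r₁ h₁ r₂ h₂ ih₁ ih₂ =>
          have hadd : χB ⟨r₁ + r₂, hBmem (add_mem h₁ h₂)⟩
              = χB ⟨r₁, hBmem h₁⟩ + χB ⟨r₂, hBmem h₂⟩ := by
            rw [← map_add]
            congr 1
          rw [mul_add, map_add, ih₁, ih₂, hadd, mul_add]
    exact main b hb'
  have hφL : ∀ x : L, φ (x : Λ) = εL x := by
    intro x
    have := hφ_b x 1 (one_mem B)
    have h1 : χB ⟨(1 : Λ), one_mem B⟩ = 1 := map_one χB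
    rw [mul_one] at this
    rw [this, h1, mul_one]
  have hφ1 : φ (1 : Λ) = 1 := by
    have := hφL 1
    simpa using this
  -- Every element of Λ lies in 𝕃 * 𝔾 * ℝ'
  have hTop : ∀ z : Λ, z ∈ 𝕃 * 𝔾 * ℝ' := by
    intro z
    obtain ⟨t, rfl⟩ := hTri.2 z
    induction t using TensorProduct.induction_on with
    | zero => rw [(triProd k G Λ ι L R).map_zero]; exact zero_mem _
    | tmul t y =>
        induction t using TensorProduct.induction_on with
        | zero => rw [TensorProduct.zero_tmul, (triProd k G Λ ι L R).map_zero]; exact zero_mem _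
        | tmul x a =>
            rw [htri_apply]
            exact Submodule.mul_mem_mul
              (Submodule.mul_mem_mul ((Subalgebra.mem_toSubmodule _).mpr x.2)
                ((Subalgebra.mem_toSubmodule _).mpr ⟨a, rfl⟩))
              ((Subalgebra.mem_toSubmodule _).mpr y.2)
        | add t1 t2 ih1 ih2 =>
            rw [TensorProduct.add_tmul, (triProd k G Λ ι L R).map_add]; exact add_mem ih1 ih2
    | add t1 t2 ih1 ih2 => rw [(triProd k G Λ ι L R).map_add]; exact add_mem ih1 ih2
  -- The span of S and the subspace V = 𝕃 * 𝕂
  set Ksp : Submodule k Λ := Submodule.span k S with hKsp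
  set V : Submodule k Λ := 𝕃 * Ksp with hV
  have hSB : ∀ s ∈ S, s ∈ B := by
    rintro s ⟨c, hc, rfl⟩
    exact c.2
  have hBK : 𝔹 * Ksp ≤ Ksp := by
    rw [Submodule.mul_le]
    intro m hm n hn
    have hmB : m ∈ B := (Subalgebra.mem_toSubmodule _).mp hm
    have hcomap : Ksp ≤ Submodule.comap (LinearMap.mulLeft k m) Ksp := by
      rw [hKsp, Submodule.span_le]
      rintro s ⟨c, hc, rfl⟩
      simp only [SetLike.mem_coe, Submodule.mem_comap, LinearMap.mulLeft_apply]
      have hval : m * ((Subalgebra.val B) c : Λ) = (Subalgebra.val B) (⟨m, hmB⟩ * c) := rfl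
      rw [hval]
      refine Submodule.subset_span ⟨⟨m, hmB⟩ * c, ?_, rfl⟩
      have hc' : χB c = 0 := hc
      show χB (⟨m, hmB⟩ * c) = 0
      rw [map_mul, hc', mul_zero]
    exact hcomap hn
  have hTK : (⊤ : Submodule k Λ) * Ksp ≤ V := by
    have h1 : (⊤ : Submodule k Λ) ≤ 𝕃 * 𝔾 * ℝ' := fun z _ => hTop z
    calc (⊤ : Submodule k Λ) * Ksp ≤ (𝕃 * 𝔾 * ℝ') * Ksp :=
          mul_le_mul' h1 le_rfl
      _ = 𝕃 * ((𝔾 * ℝ') * Ksp) := by simp only [mul_assoc]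
      _ = 𝕃 * (𝔹 * Ksp) := by rw [← hB]
      _ ≤ 𝕃 * Ksp := mul_le_mul' le_rfl hBK
  have hTV : (⊤ : Submodule k Λ) * V ≤ V := by
    calc (⊤ : Submodule k Λ) * V = (⊤ * 𝕃) * Ksp := by rw [hV, mul_assoc]
      _ ≤ ⊤ * Ksp := mul_le_mul' le_top le_rfl
      _ ≤ V := hTK
  -- J is contained in V
  have hJV : ∀ z ∈ J, z ∈ V := by
    intro z hz
    induction hz using Submodule.span_induction with
    | mem s hs =>
        have : (1 : Λ) * s ∈ V :=
          Submodule.mul_mem_mul ((Subalgebra.mem_toSubmodule _).mpr (one_mem L))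
            (Submodule.subset_span hs)
        rwa [one_mul] at this
    | zero => exact zero_mem V
    | add a b _ _ iha ihb => exact add_mem iha ihb
    | smul r z _ ihz =>
        have : r * z ∈ (⊤ : Submodule k Λ) * V :=
          Submodule.mul_mem_mul Submodule.mem_top ihz
        exact hTV this
  -- φ vanishes on V, hence on J
  have hφV : ∀ z ∈ V, φ z = 0 := by
    intro z hz
    refine Submodule.mul_induction_on hz (fun m hm n hn => ?_)
      (fun a b iha ihb => by rw [map_add, iha, ihb, add_zero])
    · have hmL : m ∈ L := (Subalgebra.mem_toSubmodule _).mp hm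
      have hker : Ksp ≤ LinearMap.ker (φ ∘ₗ LinearMap.mulLeft k m) := by
        rw [hKsp, Submodule.span_le]
        rintro s ⟨c, hc, rfl⟩
        simp only [SetLike.mem_coe, LinearMap.mem_ker, LinearMap.comp_apply,
          LinearMap.mulLeft_apply]
        have := hφ_b ⟨m, hmL⟩ ((Subalgebra.val B) c) c.2
        have hc' : χB c = 0 := hc
        have heta : χB ⟨((Subalgebra.val B) c : Λ), c.2⟩ = χB c := by congr 1
        rw [this, heta, hc', mul_zero]
      exact hker hn
  have hφJ : ∀ z ∈ J, φ z = 0 := fun z hz => hφV z (hJV z hz)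
  -- The quotient and its generator
  set π := J.mkQ with hπ
  -- every class is represented by an element of L
  have hLB2 : 𝕃 * 𝔹 ≤ 𝕃 ⊔ J.restrictScalars k := by
    rw [Submodule.mul_le]
    intro m hm n hn
    have hmL : m ∈ L := (Subalgebra.mem_toSubmodule _).mp hm
    have hnB : n ∈ B := (Subalgebra.mem_toSubmodule _).mp hn
    have hkey : m * n = (χB ⟨n, hnB⟩) • m + m * (n - algebraMap k Λ (χB ⟨n, hnB⟩)) := by
      rw [mul_sub, Algebra.algebraMap_eq_smul_one, mul_smul_comm, mul_one]
      abel
    rw [hkey]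
    refine add_mem (Submodule.mem_sup_left (Submodule.smul_mem _ _ hm))
      (Submodule.mem_sup_right ?_)
    show m * (n - algebraMap k Λ (χB ⟨n, hnB⟩)) ∈ J
    have hj : n - algebraMap k Λ (χB ⟨n, hnB⟩) ∈ J := by
      refine Ideal.subset_span ⟨⟨n, hnB⟩ - algebraMap k B (χB ⟨n, hnB⟩), ?_, ?_⟩
      · simp only [SetLike.mem_coe, RingHom.mem_ker]
        show χB (⟨n, hnB⟩ - algebraMap k B (χB ⟨n, hnB⟩)) = 0
        rw [map_sub, AlgHom.commutes, Algebra.algebraMap_self_apply, sub_self]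
      · simp [Subalgebra.coe_algebraMap]
    have := J.smul_mem m hj
    rwa [smul_eq_mul] at this
  have hdec : ∀ r : Λ, ∃ x : L, π r = π (x : Λ) := by
    intro r
    have hr : r ∈ 𝕃 ⊔ J.restrictScalars k := by
      apply hLB2
      have := hTop r
      rwa [mul_assoc, ← hB] at this
    obtain ⟨x, hx, j, hjmem, rfl⟩ := Submodule.mem_sup.mp hr
    refine ⟨⟨x, (Subalgebra.mem_toSubmodule _).mp hx⟩, ?_⟩
    have hj0 : π j = 0 := by
      rw [hπ, Submodule.mkQ_apply, Submodule.Quotient.mk_eq_zero]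
      exact hjmem
    rw [map_add, hj0, add_zero]
  -- invertibility in L of elements with nonzero augmentation
  have hinv : ∀ x : L, εL x ≠ 0 → ∃ x' : L, (x' : Λ) * (x : Λ) = 1 := by
    intro x hx
    have humem : x - algebraMap k L (εL x) ∈ RingHom.ker εL.toRingHom := by
      have h0 : εL (x - algebraMap k L (εL x)) = 0 := by
        rw [map_sub, AlgHom.commutes, Algebra.algebraMap_self_apply, sub_self]
      exact h0
    obtain ⟨n, hn⟩ := hLnil
    have hnil : IsNilpotent (x - algebraMap k L (εL x)) := ⟨n, by
      have := Ideal.pow_mem_pow humem n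
      rw [hn] at this
      rwa [Ideal.mem_bot] at this⟩
    have hunit : IsUnit (algebraMap k L (εL x)) :=
      (isUnit_iff_ne_zero.mpr hx).map (algebraMap k L)
    have hxunit : IsUnit x := by
      have hxe : x = algebraMap k L (εL x) + (x - algebraMap k L (εL x)) := by abel
      rw [hxe]
      exact hnil.isUnit_add_left_of_commute hunit (Algebra.commute_algebraMap_left _ _).symm
    obtain ⟨w, hw⟩ := hxunit
    refine ⟨(↑w⁻¹ : L), ?_⟩
    have h1 : ((↑w⁻¹ : L) * x : L) = 1 := by rw [← hw, Units.inv_mul]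
    have h2 : (((↑w⁻¹ : L) * x : L) : Λ) = ((1 : L) : Λ) := congrArg (Subalgebra.val L) h1
    simpa using h2
  -- the subspace W
  set Lplus : Submodule k Λ :=
    Submodule.map (Subalgebra.val L).toLinearMap ((RingHom.ker εL.toRingHom).restrictScalars k)
      with hLplus
  set W : Submodule k (Λ ⧸ J) := Submodule.map (π.restrictScalars k) Lplus with hW
  have hvW : π 1 ∉ W := by
    intro hmem
    obtain ⟨z, hz, hzeq⟩ := hmem
    obtain ⟨x0, hx0, rfl⟩ := hz
    have : (1 : Λ) - (Subalgebra.val L) x0 ∈ J := by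
      rw [← Submodule.Quotient.eq]
      exact hzeq.symm
    have h0 := hφJ _ this
    rw [map_sub, hφ1] at h0
    have hφx : φ ((Subalgebra.val L) x0) = εL x0 := hφL x0
    have hx0' : εL x0 = 0 := hx0
    rw [hφx, hx0', sub_zero] at h0
    exact one_ne_zero h0
  -- every proper submodule is contained in W
  have hproper : ∀ N : Submodule Λ (Λ ⧸ J), N ≠ ⊤ → ∀ m ∈ N, m ∈ W := by
    intro N hN m hm
    obtain ⟨r, rfl⟩ := J.mkQ_surjective m
    obtain ⟨x, hx⟩ := hdec r
    by_cases hεx : εL x = 0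
    · rw [hπ] at hx
      show J.mkQ r ∈ W
      rw [hx]
      exact ⟨(x : Λ), ⟨x, hεx, rfl⟩, rfl⟩
    · exfalso
      apply hN
      obtain ⟨x', hx'⟩ := hinv x hεx
      have hv : π 1 ∈ N := by
        have h1 : (x' : Λ) • π (x : Λ) ∈ N := N.smul_mem _ (hx ▸ hm)
        have h2 : (x' : Λ) • π (x : Λ) = π 1 := by
          rw [hπ, Submodule.mkQ_apply, Submodule.mkQ_apply, ← Submodule.Quotient.mk_smul,
            smul_eq_mul, hx']
        rwa [h2] at h1
      rw [eq_top_iff]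
      intro m' _
      obtain ⟨r', rfl⟩ := J.mkQ_surjective m'
      have h3 : r' • π 1 ∈ N := N.smul_mem r' hv
      have h4 : r' • π (1 : Λ) = J.mkQ r' := by
        rw [hπ, Submodule.mkQ_apply, Submodule.mkQ_apply, ← Submodule.Quotient.mk_smul,
          smul_eq_mul, mul_one]
      rwa [h4] at h3
  -- the maximal submodule
  set Imax : Submodule Λ (Λ ⧸ J) :=
    { carrier := {m | ∀ r : Λ, r • m ∈ W}
      add_mem' := fun hm hn r => by rw [smul_add]; exact W.add_mem (hm r) (hn r)
      zero_mem' := fun r => by rw [smul_zero]; exact W.zero_mem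
      smul_mem' := fun c m hm r => by rw [smul_smul]; exact hm (r * c) } with hImax
  have hne : Imax ≠ ⊤ := by
    intro htop
    have : π 1 ∈ Imax := htop ▸ Submodule.mem_top
    have h1 := this 1
    rw [one_smul] at h1
    exact hvW h1
  have hmax : ∀ N : Submodule Λ (Λ ⧸ J), N ≠ ⊤ → N ≤ Imax := by
    intro N hN m hm r
    exact hproper N hN _ (N.smul_mem r hm)
  refine ⟨Imax, hne, hmax, ?_⟩
  rw [isSimpleModule_iff_isCoatom]
  constructor
  · exact hne
  · intro b hb
    by_contra hbne
    exact (lt_iff_le_and_ne.mp hb).2 (le_antisymm (hmax b hbne) (le_of_lt hb)).symm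
end

section
/- In the triangular decomposition setting, the assignment λ ↦ L(λ) (the unique simple quotient of M(λ) = Λ ⊗_B k_B(λ)) gives a bijection from the dual group Ĝ onto the set of isomorphism classes of simple left Λ-modules. -/
open TensorProduct

set_option linter.unusedSectionVars false
set_option maxHeartbeats 1000000
set_option synthInstance.maxHeartbeats 200000

namespace TDAux

variable {k : Type} [Field k] {S : Type} [AddCommGroup S] [Module k S]

theorem smul_cancel {c d : k} {v : S} (hv : v ≠ 0) (h : c • v = d • v) : c = d := by
  by_contra hne
  have h0 : (c - d) • v = 0 := by rw [sub_smul, h, sub_self]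
  apply hv
  have h1 := congrArg (fun s => (c - d)⁻¹ • s) h0
  simpa [smul_smul, inv_mul_cancel₀ (sub_ne_zero.mpr hne)] using h1

theorem ksmul_ne_zero {c : k} {v : S} (hc : c ≠ 0) (hv : v ≠ 0) : c • v ≠ 0 := by
  intro h
  apply hv
  have h1 := congrArg (fun s => c⁻¹ • s) h
  simpa [smul_smul, inv_mul_cancel₀ hc] using h1

theorem list_prod_mem (W : Submodule k S) (fl : List (Module.End k S))
    (hfl : ∀ f ∈ fl, ∀ s ∈ W, f s ∈ W) : ∀ w ∈ W, fl.prod w ∈ W := by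
  induction fl with
  | nil => intro w hw; simpa using hw
  | cons f l ih =>
    intro w hw
    rw [List.prod_cons, Module.End.mul_apply]
    exact hfl f (List.mem_cons_self (a := f) (l := l)) _ (ih (fun f hf => hfl f (List.mem_cons_of_mem _ hf)) w hw)

theorem list_eigen (T : Module.End k S) (W : Submodule k S)
    (hinv : ∀ s ∈ W, T s ∈ W) :
    ∀ (l : List k) (w : S), w ∈ W → w ≠ 0 →
      (l.map (fun z => T - algebraMap k (Module.End k S) z)).prod w = 0 →
      ∃ (c : k) (v : S), v ∈ W ∧ v ≠ 0 ∧ T v = c • v := by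
  have hfac : ∀ (z : k) (x : S), x ∈ W → (T - algebraMap k (Module.End k S) z) x ∈ W := by
    intro z x hx
    have h2 : (T - algebraMap k (Module.End k S) z) x = T x - z • x := by
      simp [Module.algebraMap_end_apply]
    rw [h2]
    exact Submodule.sub_mem _ (hinv x hx) (Submodule.smul_mem _ _ hx)
  intro l
  induction l with
  | nil => intro w hw hw0 hp; exact absurd (by simpa using hp) hw0
  | cons z l ih =>
    intro w hw hw0 hp
    rw [List.map_cons, List.prod_cons, Module.End.mul_apply] at hp
    set u := (l.map (fun z => T - algebraMap k (Module.End k S) z)).prod w with hu_def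
    by_cases hu : u = 0
    · exact ih w hw hw0 hu
    · have hu_mem : u ∈ W := by
        rw [hu_def]
        refine list_prod_mem W _ ?_ w hw
        intro f hf s hs
        obtain ⟨z', _, rfl⟩ := List.mem_map.mp hf
        exact hfac z' s hs
      refine ⟨z, u, hu_mem, hu, ?_⟩
      have h3 : T u - z • u = 0 := by
        simpa [Module.algebraMap_end_apply] using hp
      have := sub_eq_zero.mp h3
      simpa using this

theorem end_eigen (e : ℕ) (he : 0 < e) (hroot : ∃ ζ : k, IsPrimitiveRoot ζ e)
    (T : Module.End k S) (hT : T ^ e = 1)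
    (W : Submodule k S) (hW : W ≠ ⊥) (hinv : ∀ s ∈ W, T s ∈ W) :
    ∃ (c : k) (v : S), v ∈ W ∧ v ≠ 0 ∧ T v = c • v := by
  obtain ⟨ζ, hζ⟩ := hroot
  set l := (Polynomial.nthRootsFinset e (1 : k)).toList with hl
  have hprod : (l.map (fun z => T - algebraMap k (Module.End k S) z)).prod = 0 := by
    have h1 := Polynomial.X_pow_sub_one_eq_prod he hζ
    have h2 : (∏ z ∈ Polynomial.nthRootsFinset e (1 : k), (Polynomial.X - Polynomial.C z))
        = (l.map (fun z => Polynomial.X - Polynomial.C z)).prod := by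
      rw [Finset.prod_eq_multiset_prod, ← Finset.coe_toList, Multiset.map_coe,
        Multiset.prod_coe]
    rw [h2] at h1
    have h3 := congrArg (Polynomial.aeval T) h1
    rw [map_sub, map_pow, Polynomial.aeval_X, map_one, hT, sub_self] at h3
    rw [map_list_prod (Polynomial.aeval T) _] at h3
    rw [List.map_map] at h3
    have h4 : (Polynomial.aeval T) ∘ (fun z => Polynomial.X - Polynomial.C z)
        = fun z => T - algebraMap k (Module.End k S) z := by
      funext z
      simp [Polynomial.aeval_C]
    rw [h4] at h3
    exact h3.symm
  obtain ⟨w, hwW, hw0⟩ : ∃ w ∈ W, w ≠ 0 := by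
    by_contra hcon
    push_neg at hcon
    apply hW
    ext x
    simp only [Submodule.mem_bot]
    exact ⟨fun hx => hcon x hx, fun hx => hx ▸ W.zero_mem⟩
  exact list_eigen T W hinv l w hwW hw0 (by rw [hprod]; rfl)

end TDAux


namespace TDAux2

theorem mul_mem_pow_succ {A : Type*} [Ring A] (I : Ideal A) :
    ∀ (m : ℕ) (x y : A), x ∈ I → y ∈ I ^ (m + 1) → x * y ∈ I ^ (m + 2) := by
  intro m
  induction m with
  | zero =>
    intro x y hx hy
    rw [show (0:ℕ)+1 = 1 from rfl, Submodule.pow_one] at hy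
    rw [show (0:ℕ)+2 = 1 + 1 from rfl, Submodule.pow_succ]
    exact Ideal.mul_mem_mul ((Submodule.pow_one I).symm ▸ hx) hy
  | succ n ih =>
    intro x y hx hy
    have hy' : y ∈ I ^ (n + 1) * I := by rw [← Submodule.pow_succ]; exact hy
    have goal_eq : I ^ (n + 1 + 2) = I ^ (n + 2) * I := by
      rw [← Submodule.pow_succ]
    rw [goal_eq]
    refine Submodule.mul_induction_on hy' ?_ ?_
    · intro u hu w hw
      rw [← mul_assoc]
      exact Ideal.mul_mem_mul (ih x u hx hu) hw
    · intro y₁ y₂ h₁ h₂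
      rw [mul_add]
      exact Submodule.add_mem _ h₁ h₂

variable {k G Λ : Type} [Field k] [CommGroup G] [Fintype G]
  [Ring Λ] [Algebra k Λ]
  {S : Type} [AddCommGroup S] [Module Λ S] [Module k S]
  [IsScalarTower k Λ S] [SMulCommClass k Λ S]

/-- The action of `x : Λ` on `S` as a `k`-linear endomorphism. -/
def actL (x : Λ) : Module.End k S where
  toFun s := x • s
  map_add' := smul_add x
  map_smul' c s := by simpa using (smul_comm c x s).symm

@[simp] theorem actL_apply (x : Λ) (s : S) : actL (k := k) (S := S) x s = x • s := rfl

theorem actL_mul (x y : Λ) : actL (k := k) (S := S) (x * y) = actL x * actL y :=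
  LinearMap.ext fun s => by simp [Module.End.mul_apply, mul_smul]

theorem actL_one : actL (k := k) (S := S) (1 : Λ) = 1 := LinearMap.ext fun s => by simp

theorem actL_pow (x : Λ) (n : ℕ) : actL (k := k) (S := S) (x ^ n) = actL x ^ n := by
  induction n with
  | zero => simpa [pow_zero] using actL_one
  | succ n ih => rw [pow_succ, pow_succ, actL_mul, ih]

/-- The subspace of `S` annihilated by the augmentation ideal of `R`. -/
def wtSub (R : Subalgebra k Λ) (εR : R →ₐ[k] k) : Submodule k S where
  carrier := {s | ∀ y : R, y ∈ RingHom.ker εR.toRingHom → (y : Λ) • s = 0}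
  add_mem' := fun {a b} ha hb => fun y hy => by
    rw [smul_add, ha y hy, hb y hy, add_zero]
  zero_mem' := fun y _ => smul_zero _
  smul_mem' := fun c s hs => fun y hy => by
    rw [← smul_comm c ((y : Λ)) s, hs y hy, smul_zero]

theorem mem_wtSub {R : Subalgebra k Λ} {εR : R →ₐ[k] k} {s : S} :
    s ∈ wtSub (S := S) R εR ↔ ∀ y : R, y ∈ RingHom.ker εR.toRingHom → (y : Λ) • s = 0 :=
  Iff.rfl

/-- The subspace `L⁺·S` of `S`. -/
def lspSub (L : Subalgebra k Λ) (εL : L →ₐ[k] k) : Submodule k S :=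
  Submodule.span k {z | ∃ x : L, x ∈ RingHom.ker εL.toRingHom ∧ ∃ s : S, (x : Λ) • s = z}

/-- The subspace `(I^(m+1))·S` of `S`. -/
def pspSub (C : Subalgebra k Λ) (I : Ideal C) (m : ℕ) : Submodule k S :=
  Submodule.span k {z | ∃ x : C, x ∈ I ^ (m + 1) ∧ ∃ s : S, (x : Λ) • s = z}

theorem psp_bot (C : Subalgebra k Λ) (I : Ideal C) (n : ℕ) (hI : I ^ (n + 1) = ⊥) :
    pspSub (S := S) C I n = ⊥ := by
  rw [← le_bot_iff]
  apply Submodule.span_le.mpr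
  rintro z ⟨x, hx, s, rfl⟩
  rw [hI] at hx
  have hx0 : x = 0 := (Submodule.mem_bot _).mp hx
  simp [hx0]

theorem wt_ne_bot (R : Subalgebra k Λ) (εR : R →ₐ[k] k)
    (hRnil : ∃ n : ℕ, (RingHom.ker εR.toRingHom) ^ n = ⊥) (hex : ∃ s : S, s ≠ 0) :
    wtSub (S := S) R εR ≠ ⊥ := by
  intro hbot
  obtain ⟨n, hn⟩ := hRnil
  set I := RingHom.ker εR.toRingHom with hI
  have hn1 : I ^ (n + 1) = ⊥ := by
    rw [Submodule.pow_succ, hn]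
    exact Submodule.bot_mul I
  have hstep : ∀ m, pspSub (S := S) R I (m + 1) = ⊥ → pspSub (S := S) R I m = ⊥ := by
    intro m hm
    have hle : pspSub (S := S) R I m ≤ wtSub (S := S) R εR := by
      apply Submodule.span_le.mpr
      rintro z ⟨x, hx, s, rfl⟩
      intro y hy
      have hmem : (y * x : R) ∈ I ^ (m + 2) := mul_mem_pow_succ I m y x hy hx
      have h2 : ((y * x : R) : Λ) • s ∈ pspSub (S := S) R I (m + 1) :=
        Submodule.subset_span ⟨y * x, hmem, s, rfl⟩
      rw [hm] at h2
      have h3 : ((y * x : R) : Λ) • s = 0 := (Submodule.mem_bot _).mp h2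
      calc (y : Λ) • ((x : Λ) • s) = ((y : Λ) * (x : Λ)) • s := (mul_smul _ _ _).symm
        _ = ((y * x : R) : Λ) • s := by norm_cast
        _ = 0 := h3
    rw [hbot, le_bot_iff] at hle
    exact hle
  have hdown : ∀ m, pspSub (S := S) R I m = ⊥ → pspSub (S := S) R I 0 = ⊥ := by
    intro m
    induction m with
    | zero => exact id
    | succ p ih => intro h; exact ih (hstep p h)
  have h0 : pspSub (S := S) R I 0 = ⊥ := hdown n (psp_bot R I n hn1)
  obtain ⟨s₀, hs₀⟩ := hex
  have hmem : s₀ ∈ wtSub (S := S) R εR := by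
    intro y hy
    have hy1 : y ∈ I ^ (0 + 1) := by rw [zero_add, Submodule.pow_one]; exact hy
    have h2 : (y : Λ) • s₀ ∈ pspSub (S := S) R I 0 := Submodule.subset_span ⟨y, hy1, s₀, rfl⟩
    rw [h0] at h2
    exact (Submodule.mem_bot _).mp h2
  rw [hbot] at hmem
  exact hs₀ ((Submodule.mem_bot _).mp hmem)

theorem lsp_ne_top (L : Subalgebra k Λ) (εL : L →ₐ[k] k)
    (hLnil : ∃ n : ℕ, (RingHom.ker εL.toRingHom) ^ n = ⊥) (hex : ∃ s : S, s ≠ 0) :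
    lspSub (S := S) L εL ≠ ⊤ := by
  intro htop
  obtain ⟨n, hn⟩ := hLnil
  set I := RingHom.ker εL.toRingHom with hI
  have hn1 : I ^ (n + 1) = ⊥ := by
    rw [Submodule.pow_succ, hn]
    exact Submodule.bot_mul I
  have h0 : pspSub (S := S) L I 0 = lspSub (S := S) L εL := by
    unfold pspSub lspSub
    congr 1
    ext z
    constructor
    · rintro ⟨x, hx, s, rfl⟩
      exact ⟨x, by rwa [zero_add, Submodule.pow_one] at hx, s, rfl⟩
    · rintro ⟨x, hx, s, rfl⟩
      exact ⟨x, by rwa [zero_add, Submodule.pow_one], s, rfl⟩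
  have hstep : ∀ m, pspSub (S := S) L I m = ⊤ → pspSub (S := S) L I (m + 1) = ⊤ := by
    intro m hm
    rw [eq_top_iff]
    intro s _
    have hs : s ∈ pspSub (S := S) L I m := by rw [hm]; trivial
    refine Submodule.span_induction ?_ ?_ ?_ ?_ hs
    · rintro z ⟨x, hx, t, rfl⟩
      have ht : t ∈ lspSub (S := S) L εL := by rw [htop]; trivial
      refine Submodule.span_induction (p := fun t' _ => (x : Λ) • t' ∈ pspSub (S := S) L I (m + 1))
        ?_ ?_ ?_ ?_ ht
      · rintro z' ⟨x', hx', u, rfl⟩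
        have hmem : (x * x' : L) ∈ I ^ (m + 2) := by
          rw [show m + 2 = (m + 1) + 1 from rfl, Submodule.pow_succ]
          exact Ideal.mul_mem_mul hx hx'
        have : (x : Λ) • ((x' : Λ) • u) = ((x * x' : L) : Λ) • u := by
          rw [← mul_smul]; norm_cast
        rw [this]
        exact Submodule.subset_span ⟨x * x', hmem, u, rfl⟩
      · show (x : Λ) • (0 : S) ∈ pspSub (S := S) L I (m + 1)
        rw [smul_zero]; exact Submodule.zero_mem _
      · intro a b _ _ ha hb
        show (x : Λ) • (a + b) ∈ pspSub (S := S) L I (m + 1)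
        rw [smul_add]; exact Submodule.add_mem _ ha hb
      · intro c a _ ha
        show (x : Λ) • (c • a) ∈ pspSub (S := S) L I (m + 1)
        rw [smul_comm]; exact Submodule.smul_mem _ _ ha
    · exact Submodule.zero_mem _
    · intro a b _ _ ha hb; exact Submodule.add_mem _ ha hb
    · intro c a _ ha; exact Submodule.smul_mem _ _ ha
  have hall : ∀ m, pspSub (S := S) L I m = ⊤ := by
    intro m
    induction m with
    | zero => rw [h0]; exact htop
    | succ p ih => exact hstep p ih
  have hbot := psp_bot (S := S) L I n hn1
  rw [hall n] at hbot
  obtain ⟨s₀, hs₀⟩ := hex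
  apply hs₀
  have : s₀ ∈ (⊤ : Submodule k S) := trivial
  rw [hbot] at this
  exact (Submodule.mem_bot _).mp this

theorem decomp (C : Subalgebra k Λ) (ε : C →ₐ[k] k) (x : C) :
    ∃ x' : C, x' ∈ RingHom.ker ε.toRingHom ∧ (x : Λ) = (x' : Λ) + algebraMap k Λ (ε x) := by
  refine ⟨x - algebraMap k C (ε x), ?_, ?_⟩
  · rw [RingHom.mem_ker]
    show ε _ = 0
    simp
  · have : ((x - algebraMap k C (ε x) : C) : Λ) = (x : Λ) - algebraMap k Λ (ε x) := by
      push_cast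
      rfl
    rw [this, sub_add_cancel]

theorem smul_eps (C : Subalgebra k Λ) (ε : C →ₐ[k] k) (v : S)
    (hker : ∀ x' : C, x' ∈ RingHom.ker ε.toRingHom → (x' : Λ) • v = 0) (x : C) :
    (x : Λ) • v = ε x • v := by
  obtain ⟨x', hx', heq⟩ := decomp C ε x
  rw [heq, add_smul, hker x' hx', zero_add, algebraMap_smul]



variable (ι : MonoidAlgebra k G →ₐ[k] Λ)

theorem wt_stable (R : Subalgebra k Λ) (εR : R →ₐ[k] k)
    (hII_R : Submodule.map (Subalgebra.val R).toLinearMap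
          ((RingHom.ker εR.toRingHom).restrictScalars k) *
        Subalgebra.toSubmodule ι.range =
      Subalgebra.toSubmodule ι.range *
        Submodule.map (Subalgebra.val R).toLinearMap
          ((RingHom.ker εR.toRingHom).restrictScalars k))
    (g : G) :
    ∀ z ∈ wtSub (S := S) R εR, ι (MonoidAlgebra.of k G g) • z ∈ wtSub (S := S) R εR := by
  intro z hz y hy
  rw [← mul_smul]
  have hkey : ∀ u ∈ Subalgebra.toSubmodule ι.range *
      Submodule.map (Subalgebra.val R).toLinearMap ((RingHom.ker εR.toRingHom).restrictScalars k),
      u • z = 0 := by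
    intro u hu
    refine Submodule.mul_induction_on hu ?_ ?_
    · intro r _ m hm
      obtain ⟨y', hy', rfl⟩ := Submodule.mem_map.mp hm
      rw [mul_smul]
      have h2 : ((Subalgebra.val R).toLinearMap y' : Λ) • z = 0 :=
        hz y' ((Submodule.restrictScalars_mem k _ _).mp hy')
      rw [h2, smul_zero]
    · intro u₁ u₂ h₁ h₂
      rw [add_smul, h₁, h₂, add_zero]
  apply hkey
  rw [← hII_R]
  exact Submodule.mul_mem_mul
    (Submodule.mem_map.mpr ⟨y, (Submodule.restrictScalars_mem k _ _).mpr hy, rfl⟩)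
    ((Subalgebra.mem_toSubmodule _).mpr ⟨_, rfl⟩)

theorem lsp_stable (L : Subalgebra k Λ) (εL : L →ₐ[k] k)
    (hII_L : Subalgebra.toSubmodule ι.range *
        Submodule.map (Subalgebra.val L).toLinearMap
          ((RingHom.ker εL.toRingHom).restrictScalars k) =
      Submodule.map (Subalgebra.val L).toLinearMap
          ((RingHom.ker εL.toRingHom).restrictScalars k) *
        Subalgebra.toSubmodule ι.range)
    (g : G) :
    ∀ z ∈ lspSub (S := S) L εL, ι (MonoidAlgebra.of k G g) • z ∈ lspSub (S := S) L εL := by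
  have hkey : ∀ u ∈ Submodule.map (Subalgebra.val L).toLinearMap
      ((RingHom.ker εL.toRingHom).restrictScalars k) * Subalgebra.toSubmodule ι.range,
      ∀ s : S, u • s ∈ lspSub (S := S) L εL := by
    intro u hu
    refine Submodule.mul_induction_on hu ?_ ?_
    · intro m hm r _ s
      obtain ⟨x, hx, rfl⟩ := Submodule.mem_map.mp hm
      rw [mul_smul]
      exact Submodule.subset_span
        ⟨x, (Submodule.restrictScalars_mem k _ _).mp hx, r • s, rfl⟩
    · intro u₁ u₂ h₁ h₂ s
      rw [add_smul]
      exact Submodule.add_mem _ (h₁ s) (h₂ s)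
  intro z hz
  refine Submodule.span_induction
    (p := fun z' _ => ι (MonoidAlgebra.of k G g) • z' ∈ lspSub (S := S) L εL) ?_ ?_ ?_ ?_ hz
  · rintro z' ⟨x, hx, s, rfl⟩
    rw [← mul_smul]
    apply hkey
    rw [← hII_L]
    exact Submodule.mul_mem_mul ((Subalgebra.mem_toSubmodule _).mpr ⟨_, rfl⟩)
      (Submodule.mem_map.mpr ⟨x, (Submodule.restrictScalars_mem k _ _).mpr hx, rfl⟩)
  · show ι (MonoidAlgebra.of k G g) • (0 : S) ∈ lspSub (S := S) L εL
    rw [smul_zero]; exact Submodule.zero_mem _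
  · intro a b _ _ ha hb
    show ι (MonoidAlgebra.of k G g) • (a + b) ∈ lspSub (S := S) L εL
    rw [smul_add]; exact Submodule.add_mem _ ha hb
  · intro c a _ ha
    show ι (MonoidAlgebra.of k G g) • (c • a) ∈ lspSub (S := S) L εL
    rw [smul_comm]; exact Submodule.smul_mem _ _ ha

theorem range_le_B (R B : Subalgebra k Λ)
    (hB : Subalgebra.toSubmodule B =
      Subalgebra.toSubmodule ι.range * Subalgebra.toSubmodule R) :
    ∀ a : MonoidAlgebra k G, ι a ∈ B := by
  intro a
  have h1 : ι a ∈ Subalgebra.toSubmodule B := by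
    rw [hB]
    have h2 := Submodule.mul_mem_mul
      ((Subalgebra.mem_toSubmodule ι.range).mpr ⟨a, rfl⟩)
      ((Subalgebra.mem_toSubmodule R).mpr R.one_mem)
    simpa using h2
  exact (Subalgebra.mem_toSubmodule _).mp h1

theorem R_le_B (R B : Subalgebra k Λ)
    (hB : Subalgebra.toSubmodule B =
      Subalgebra.toSubmodule ι.range * Subalgebra.toSubmodule R) :
    ∀ y : R, (y : Λ) ∈ B := by
  intro y
  have h1 : (y : Λ) ∈ Subalgebra.toSubmodule B := by
    rw [hB]
    have h2 := Submodule.mul_mem_mul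
      ((Subalgebra.mem_toSubmodule ι.range).mpr (one_mem ι.range))
      ((Subalgebra.mem_toSubmodule R).mpr y.2)
    simpa using h2
  exact (Subalgebra.mem_toSubmodule _).mp h1

theorem chiAct (R B : Subalgebra k Λ) (εR : R →ₐ[k] k)
    (hB : Subalgebra.toSubmodule B =
      Subalgebra.toSubmodule ι.range * Subalgebra.toSubmodule R)
    (χ : B →ₐ[k] k) (lamv : G → k)
    (hχG : ∀ (g : G) (hg : ι (MonoidAlgebra.of k G g) ∈ B),
      χ ⟨ι (MonoidAlgebra.of k G g), hg⟩ = lamv g)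
    (hχR : ∀ (y : R) (hy : (y : Λ) ∈ B), χ ⟨(y : Λ), hy⟩ = εR y)
    (v : S)
    (hRv : ∀ y : R, y ∈ RingHom.ker εR.toRingHom → (y : Λ) • v = 0)
    (hGv : ∀ g : G, ι (MonoidAlgebra.of k G g) • v = lamv g • v) :
    ∀ (x : Λ) (hx : x ∈ B), x • v = χ ⟨x, hx⟩ • v := by
  have haux : ∀ a : MonoidAlgebra k G, ∃ h : ι a ∈ B, ι a • v = χ ⟨ι a, h⟩ • v := by
    intro a
    induction a using MonoidAlgebra.induction_on with
    | of g =>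
      have hg : ι (MonoidAlgebra.of k G g) ∈ B := range_le_B ι R B hB _
      exact ⟨hg, by rw [hGv g, hχG g hg]⟩
    | add f g hf hg =>
      obtain ⟨h1, e1⟩ := hf
      obtain ⟨h2, e2⟩ := hg
      have h3 : ι (f + g) ∈ B := by rw [map_add]; exact add_mem h1 h2
      refine ⟨h3, ?_⟩
      have hco : (⟨ι (f + g), h3⟩ : B) = ⟨ι f, h1⟩ + ⟨ι g, h2⟩ :=
        Subtype.ext (by simp [map_add])
      rw [hco, map_add, map_add, add_smul, e1, e2, add_smul]
    | smul r f hf =>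
      obtain ⟨h1, e1⟩ := hf
      have h3 : ι (r • f) ∈ B := by rw [map_smul]; exact B.smul_mem h1 r
      refine ⟨h3, ?_⟩
      have hco : (⟨ι (r • f), h3⟩ : B) = r • ⟨ι f, h1⟩ :=
        Subtype.ext (by simp [map_smul])
      rw [hco, map_smul, map_smul, smul_assoc, e1, smul_assoc]
  have hrw : ∀ x ∈ Subalgebra.toSubmodule ι.range * Subalgebra.toSubmodule R,
      ∃ h : x ∈ B, x • v = χ ⟨x, h⟩ • v := by
    intro x hx
    refine Submodule.mul_induction_on hx ?_ ?_
    · intro r hr m hm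
      obtain ⟨a, rfl⟩ := (Subalgebra.mem_toSubmodule _).mp hr
      set y : R := ⟨m, (Subalgebra.mem_toSubmodule _).mp hm⟩ with hy_def
      obtain ⟨ha, ea⟩ := haux a
      have hyB : (y : Λ) ∈ B := R_le_B ι R B hB y
      have hxy : ι a * (y : Λ) ∈ B := mul_mem ha hyB
      refine ⟨hxy, ?_⟩
      have hco : (⟨ι a * (y : Λ), hxy⟩ : B) = ⟨ι a, ha⟩ * ⟨(y : Λ), hyB⟩ := rfl
      have hyv : (y : Λ) • v = εR y • v := smul_eps R εR v hRv y
      calc (ι a * (y : Λ)) • v = ι a • ((y : Λ) • v) := mul_smul _ _ _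
        _ = ι a • (εR y • v) := by rw [hyv]
        _ = εR y • (ι a • v) := (smul_comm _ _ _).symm
        _ = εR y • (χ ⟨ι a, ha⟩ • v) := by rw [ea]
        _ = (χ ⟨ι a, ha⟩ * εR y) • v := by rw [smul_smul, mul_comm]
        _ = χ ⟨ι a * (y : Λ), hxy⟩ • v := by rw [hco, map_mul, hχR y hyB]
    · rintro x₁ x₂ ⟨h1, e1⟩ ⟨h2, e2⟩
      have h3 : x₁ + x₂ ∈ B := add_mem h1 h2
      refine ⟨h3, ?_⟩
      have hco : (⟨x₁ + x₂, h3⟩ : B) = ⟨x₁, h1⟩ + ⟨x₂, h2⟩ := rfl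
      rw [hco, map_add, add_smul, e1, e2, add_smul]
  intro x hx
  have hx' : x ∈ Subalgebra.toSubmodule ι.range * Subalgebra.toSubmodule R := by
    rw [← hB]
    exact (Subalgebra.mem_toSubmodule B).mpr hx
  obtain ⟨h', e⟩ := hrw x hx'
  exact e


theorem keyspan (L R : Subalgebra k Λ) (εL : L →ₐ[k] k) (εR : R →ₐ[k] k)
    (hTri : Function.Bijective (triProd k G Λ ι L R))
    (hS : IsSimpleModule Λ S)
    (lamv : G → k) (v : S) (hv : v ≠ 0)
    (hRv : ∀ y : R, y ∈ RingHom.ker εR.toRingHom → (y : Λ) • v = 0)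
    (hGv : ∀ g : G, ι (MonoidAlgebra.of k G g) • v = lamv g • v) :
    ∀ s : S, s ∈ (Submodule.span k {v}) ⊔ lspSub (S := S) L εL := by
  have hma : ∀ a : MonoidAlgebra k G, ι a • v ∈ Submodule.span k {v} := by
    intro a
    induction a using MonoidAlgebra.induction_on with
    | of g =>
      rw [hGv g]
      exact Submodule.smul_mem _ _ (Submodule.mem_span_singleton_self v)
    | add f g hf hg =>
      rw [map_add, add_smul]; exact Submodule.add_mem _ hf hg
    | smul r f hf =>
      rw [map_smul, smul_assoc]; exact Submodule.smul_mem _ _ hf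
  have hp : ∀ p : L ⊗[k] MonoidAlgebra k G,
      prodLG k G Λ ι L p • v ∈ Submodule.span k {v} ⊔ lspSub (S := S) L εL := by
    intro p
    induction p using TensorProduct.induction_on with
    | zero =>
      rw [(prodLG k G Λ ι L).map_zero, zero_smul]; exact Submodule.zero_mem _
    | add a b ha hb =>
      rw [(prodLG k G Λ ι L).map_add a b, add_smul]; exact Submodule.add_mem _ ha hb
    | tmul ℓ a =>
      have h1 : prodLG k G Λ ι L (ℓ ⊗ₜ a) = (ℓ : Λ) * ι a := by
        simp [prodLG]
      rw [h1, mul_smul]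
      obtain ⟨d, hd⟩ := Submodule.mem_span_singleton.mp (hma a)
      rw [← hd, smul_comm]
      apply Submodule.smul_mem
      obtain ⟨ℓ', hℓ', heq⟩ := decomp L εL ℓ
      rw [heq, add_smul, algebraMap_smul]
      apply Submodule.add_mem
      · exact Submodule.mem_sup_right (Submodule.subset_span ⟨ℓ', hℓ', v, rfl⟩)
      · exact Submodule.mem_sup_left
          (Submodule.smul_mem _ _ (Submodule.mem_span_singleton_self v))
  intro s
  have hsp : Submodule.span Λ {v} = ⊤ := by
    rcases eq_bot_or_eq_top (Submodule.span Λ {v}) with h | h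
    · exfalso
      apply hv
      have := Submodule.mem_span_singleton_self (R := Λ) v
      rw [h] at this
      exact (Submodule.mem_bot Λ).mp this
    · exact h
  have hs : s ∈ Submodule.span Λ {v} := by rw [hsp]; trivial
  obtain ⟨x, rfl⟩ := Submodule.mem_span_singleton.mp hs
  obtain ⟨t, rfl⟩ := hTri.2 x
  clear hs
  induction t using TensorProduct.induction_on with
  | zero =>
    rw [(triProd k G Λ ι L R).map_zero, zero_smul]; exact Submodule.zero_mem _
  | add a b ha hb =>
    rw [(triProd k G Λ ι L R).map_add a b, add_smul]; exact Submodule.add_mem _ ha hb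
  | tmul p y =>
    have h1 : triProd k G Λ ι L R (p ⊗ₜ y) = prodLG k G Λ ι L p * (y : Λ) := by
      simp [triProd]
    rw [h1, mul_smul, smul_eps R εR v hRv y, smul_comm]
    exact Submodule.smul_mem _ _ (hp p)

theorem extract (B : Subalgebra k Λ) (χ : B →ₐ[k] k)
    (f : (Λ ⧸ Ideal.span
        ((Subalgebra.val B) '' (RingHom.ker χ.toRingHom : Set B))) →ₗ[Λ] S)
    (hf : Function.Surjective f) (hS : IsSimpleModule Λ S) :
    ∃ v : S, v ≠ 0 ∧ ∀ b : B, b ∈ RingHom.ker χ.toRingHom → (b : Λ) • v = 0 := by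
  refine ⟨f (Submodule.Quotient.mk 1), ?_, ?_⟩
  · intro h0
    haveI := IsSimpleModule.nontrivial Λ S
    obtain ⟨s, hs⟩ := exists_ne (0 : S)
    obtain ⟨q, hq⟩ := hf s
    obtain ⟨x, rfl⟩ := Submodule.Quotient.mk_surjective _ q
    have h2 : (Submodule.Quotient.mk x : Λ ⧸ Ideal.span
        ((Subalgebra.val B) '' (RingHom.ker χ.toRingHom : Set B))) = x • Submodule.Quotient.mk 1 := by
      rw [← Submodule.Quotient.mk_smul, smul_eq_mul, mul_one]
    apply hs
    rw [← hq, h2, map_smul, h0, smul_zero]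
  · intro b hb
    have hmem : (b : Λ) ∈ Ideal.span ((Subalgebra.val B) '' (RingHom.ker χ.toRingHom : Set B)) :=
      Ideal.subset_span ⟨b, hb, rfl⟩
    have h2 : ((b : Λ) • (Submodule.Quotient.mk 1 : Λ ⧸ Ideal.span
        ((Subalgebra.val B) '' (RingHom.ker χ.toRingHom : Set B)))) = 0 := by
      rw [← Submodule.Quotient.mk_smul, smul_eq_mul, mul_one, Submodule.Quotient.mk_eq_zero]
      exact hmem
    rw [← map_smul, h2, map_zero]

theorem simult (e : ℕ) (he : 0 < e) (hroot : ∃ ζ : k, IsPrimitiveRoot ζ e)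
    (T : G → Module.End k S) (hTe : ∀ g, T g ^ e = 1)
    (hcomm : ∀ g h : G, T g * T h = T h * T g) :
    ∀ (s : Finset G) (W : Submodule k S), W ≠ ⊥ → (∀ g, ∀ w ∈ W, T g w ∈ W) →
    ∃ (W' : Submodule k S) (c : G → k), W' ≠ ⊥ ∧ W' ≤ W ∧
      (∀ g, ∀ w ∈ W', T g w ∈ W') ∧ ∀ g ∈ s, ∀ w ∈ W', T g w = c g • w := by
  classical
  intro s
  induction s using Finset.induction_on with
  | empty =>
    intro W hW hinv
    exact ⟨W, fun _ => 0, hW, le_rfl, hinv, by simp⟩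
  | insert a s ha ih =>
    intro W hW hinv
    obtain ⟨W', c, hW', hle, hinv', hsc⟩ := ih W hW hinv
    obtain ⟨ca, v, hvW, hv0, hTv⟩ :=
      TDAux.end_eigen e he hroot (T a) (hTe a) W' hW' (fun x hx => hinv' a x hx)
    set W'' := W' ⊓ LinearMap.ker (T a - algebraMap k (Module.End k S) ca) with hW''def
    have hvW'' : v ∈ W'' := by
      refine ⟨hvW, ?_⟩
      rw [SetLike.mem_coe, LinearMap.mem_ker, LinearMap.sub_apply,
        Module.algebraMap_end_apply, hTv, sub_self]
    refine ⟨W'', Function.update c a ca, ?_, le_trans inf_le_left hle, ?_, ?_⟩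
    · intro hbot
      rw [hbot] at hvW''
      exact hv0 ((Submodule.mem_bot k).mp hvW'')
    · intro g w hw
      refine ⟨hinv' g w hw.1, ?_⟩
      have hk : w ∈ LinearMap.ker (T a - algebraMap k (Module.End k S) ca) := hw.2
      show T g w ∈ LinearMap.ker (T a - algebraMap k (Module.End k S) ca)
      rw [LinearMap.mem_ker] at hk ⊢
      have hcg : (T a - algebraMap k (Module.End k S) ca) (T g w)
          = T g ((T a - algebraMap k (Module.End k S) ca) w) := by
        rw [LinearMap.sub_apply, LinearMap.sub_apply, map_sub,
          Module.algebraMap_end_apply, Module.algebraMap_end_apply, map_smul]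
        congr 1
        exact LinearMap.congr_fun (hcomm a g) w
      rw [hcg, hk, map_zero]
    · intro g hg w hw
      rcases Finset.mem_insert.mp hg with rfl | hgs
      · have hk : w ∈ LinearMap.ker (T g - algebraMap k (Module.End k S) ca) := hw.2
        rw [LinearMap.mem_ker, LinearMap.sub_apply, Module.algebraMap_end_apply,
          sub_eq_zero] at hk
        rw [hk, Function.update_self]
      · rw [Function.update_of_ne (ne_of_mem_of_not_mem hgs ha)]
        exact hsc g hgs w hw.1

theorem compare (L R : Subalgebra k Λ) (εL : L →ₐ[k] k) (εR : R →ₐ[k] k)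
    (hTri : Function.Bijective (triProd k G Λ ι L R))
    (hS : IsSimpleModule Λ S)
    (hLnil : ∃ n : ℕ, (RingHom.ker εL.toRingHom) ^ n = ⊥)
    (hII_L : Subalgebra.toSubmodule ι.range *
        Submodule.map (Subalgebra.val L).toLinearMap
          ((RingHom.ker εL.toRingHom).restrictScalars k) =
      Submodule.map (Subalgebra.val L).toLinearMap
          ((RingHom.ker εL.toRingHom).restrictScalars k) *
        Subalgebra.toSubmodule ι.range)
    (lam₁ lam₂ : G →* kˣ) (v₁ v₂ : S) (hv₁ : v₁ ≠ 0) (hv₂ : v₂ ≠ 0)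
    (hRv₁ : ∀ y : R, y ∈ RingHom.ker εR.toRingHom → (y : Λ) • v₁ = 0)
    (hGv₁ : ∀ g : G, ι (MonoidAlgebra.of k G g) • v₁ = (lam₁ g : k) • v₁)
    (hRv₂ : ∀ y : R, y ∈ RingHom.ker εR.toRingHom → (y : Λ) • v₂ = 0)
    (hGv₂ : ∀ g : G, ι (MonoidAlgebra.of k G g) • v₂ = (lam₂ g : k) • v₂) :
    lam₁ = lam₂ := by
  set W := lspSub (S := S) L εL with hWdef
  have hWt : W ≠ ⊤ := lsp_ne_top L εL hLnil ⟨v₁, hv₁⟩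
  have h2 : v₂ ∈ Submodule.span k {v₁} ⊔ W :=
    keyspan ι L R εL εR hTri hS (fun g => (lam₁ g : k)) v₁ hv₁ hRv₁ hGv₁ v₂
  have hv2n : v₂ ∉ W := by
    intro hmem
    apply hWt
    rw [eq_top_iff]
    intro s _
    have h3 := keyspan ι L R εL εR hTri hS (fun g => (lam₂ g : k)) v₂ hv₂ hRv₂ hGv₂ s
    have h4 : Submodule.span k {v₂} ⊔ W ≤ W := by
      apply sup_le _ le_rfl
      rw [Submodule.span_le, Set.singleton_subset_iff]
      exact hmem
    exact h4 h3
  obtain ⟨aa, haa, w, hw, hsum⟩ := Submodule.mem_sup.mp h2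
  obtain ⟨d, rfl⟩ := Submodule.mem_span_singleton.mp haa
  have hd : d ≠ 0 := by
    rintro rfl
    apply hv2n
    rw [← hsum, zero_smul, zero_add]
    exact hw
  have hv1n : v₁ ∉ W := by
    intro hmem
    apply hv2n
    rw [← hsum]
    exact Submodule.add_mem _ (Submodule.smul_mem _ _ hmem) hw
  refine MonoidHom.ext fun g => Units.ext ?_
  by_contra hne
  have e1 : (lam₂ g : k) • (d • v₁) + (lam₂ g : k) • w
      = d • ((lam₁ g : k) • v₁) + ι (MonoidAlgebra.of k G g) • w := by
    have e0 : (lam₂ g : k) • v₂ = ι (MonoidAlgebra.of k G g) • v₂ := (hGv₂ g).symm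
    rw [← hsum, smul_add, smul_add] at e0
    rw [e0]
    congr 1
    rw [smul_comm, hGv₁ g]
  have e3 : ((lam₂ g : k) * d - d * (lam₁ g : k)) • v₁
      = ι (MonoidAlgebra.of k G g) • w - (lam₂ g : k) • w := by
    rw [sub_smul, mul_smul, mul_smul]
    rw [sub_eq_sub_iff_add_eq_add]
    rw [add_comm (d • ((lam₁ g:k) • v₁)) (ι (MonoidAlgebra.of k G g) • w)] at e1
    exact e1
  have hmemW : ((lam₂ g : k) * d - d * (lam₁ g : k)) • v₁ ∈ W := by
    rw [e3]
    exact Submodule.sub_mem _ (lsp_stable ι L εL hII_L g w hw) (Submodule.smul_mem _ _ hw)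
  have hc : (lam₂ g : k) * d - d * (lam₁ g : k) ≠ 0 := by
    intro h0
    apply hne
    have h1 : d * (lam₂ g : k) = d * (lam₁ g : k) := by
      rw [mul_comm d ((lam₂ g : k))]
      exact sub_eq_zero.mp h0
    exact (mul_left_cancel₀ hd h1).symm
  apply hv1n
  have := Submodule.smul_mem W ((lam₂ g : k) * d - d * (lam₁ g : k))⁻¹ hmemW
  rwa [smul_smul, inv_mul_cancel₀ hc, one_smul] at this

end TDAux2

/-- Theorem 2.4 / 3.10: in the triangular decomposition setting, the assignment
`λ ↦ L(λ)` (unique simple quotient of `M(λ) = Λ ⊗_B k_B(λ)`, realized as `Λ/Λ·ker χ_B^λ`)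
gives a bijection from the dual group `Ĝ` onto the isomorphism classes of simple left
`Λ`-modules: every simple left `Λ`-module is a quotient of `M(λ)` for exactly one `λ`. -/
theorem stmt7 (k G Λ : Type) [Field k] [CommGroup G] [Fintype G]
    (hchar : (Fintype.card G : k) ≠ 0)
    (hroot : ∃ ζ : k, IsPrimitiveRoot ζ (Monoid.exponent G))
    [Ring Λ] [Algebra k Λ] [FiniteDimensional k Λ]
    (ι : MonoidAlgebra k G →ₐ[k] Λ) (hι : Function.Injective ι)
    (L R : Subalgebra k Λ)
    (hTri : Function.Bijective (triProd k G Λ ι L R))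
    (A B : Subalgebra k Λ)
    (hA : Subalgebra.toSubmodule A =
      Subalgebra.toSubmodule L * Subalgebra.toSubmodule ι.range)
    (hB : Subalgebra.toSubmodule B =
      Subalgebra.toSubmodule ι.range * Subalgebra.toSubmodule R)
    (εL : L →ₐ[k] k) (εR : R →ₐ[k] k)
    (hLnil : ∃ n : ℕ, (RingHom.ker εL.toRingHom) ^ n = ⊥)
    (hRnil : ∃ n : ℕ, (RingHom.ker εR.toRingHom) ^ n = ⊥)
    (hII_L : Subalgebra.toSubmodule ι.range *
        Submodule.map (Subalgebra.val L).toLinearMap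
          ((RingHom.ker εL.toRingHom).restrictScalars k) =
      Submodule.map (Subalgebra.val L).toLinearMap
          ((RingHom.ker εL.toRingHom).restrictScalars k) *
        Subalgebra.toSubmodule ι.range)
    (hII_R : Submodule.map (Subalgebra.val R).toLinearMap
          ((RingHom.ker εR.toRingHom).restrictScalars k) *
        Subalgebra.toSubmodule ι.range =
      Subalgebra.toSubmodule ι.range *
        Submodule.map (Subalgebra.val R).toLinearMap
          ((RingHom.ker εR.toRingHom).restrictScalars k))
    (χB : (G →* kˣ) → (B →ₐ[k] k))
    (hχB_G : ∀ (lam : G →* kˣ) (g : G) (hg : ι (MonoidAlgebra.of k G g) ∈ B),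
      χB lam ⟨ι (MonoidAlgebra.of k G g), hg⟩ = lam g)
    (hχB_R : ∀ (lam : G →* kˣ) (y : R) (hy : (y : Λ) ∈ B),
      χB lam ⟨(y : Λ), hy⟩ = εR y) :
    ∀ (S : Type) [AddCommGroup S] [Module Λ S], IsSimpleModule Λ S →
      ∃! lam : G →* kˣ,
        ∃ f : (Λ ⧸ Ideal.span
            ((Subalgebra.val B) '' (RingHom.ker (χB lam).toRingHom : Set B))) →ₗ[Λ] S,
          Function.Surjective f := by
  intro S _ _ hS
  letI : Module k S := Module.compHom S (algebraMap k Λ)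
  haveI hTower : IsScalarTower k Λ S :=
    ⟨fun c x s => by rw [Algebra.smul_def, mul_smul]; rfl⟩
  haveI hComm : SMulCommClass k Λ S := by
    constructor
    intro c x s
    show (algebraMap k Λ c) • (x • s) = x • ((algebraMap k Λ c) • s)
    rw [← mul_smul, ← mul_smul, Algebra.commutes]
  haveI := IsSimpleModule.nontrivial Λ S
  obtain ⟨s₀, hs₀⟩ := exists_ne (0 : S)
  have hex : ∃ s : S, s ≠ 0 := ⟨s₀, hs₀⟩
  -- the weight space is nonzero and G-stable
  have hN : TDAux2.wtSub (S := S) R εR ≠ ⊥ := TDAux2.wt_ne_bot R εR hRnil hex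
  have hNstab := TDAux2.wt_stable (S := S) ι R εR hII_R
  -- simultaneous eigenvector for the commuting G-action
  set e := Monoid.exponent G with he_def
  have he : 0 < e := Monoid.ExponentExists.exponent_pos Monoid.ExponentExists.of_finite
  set T : G → Module.End k S :=
    fun g => TDAux2.actL (k := k) (S := S) (ι (MonoidAlgebra.of k G g)) with hT_def
  have hTe : ∀ g, T g ^ e = 1 := by
    intro g
    rw [hT_def]
    show TDAux2.actL (k := k) (S := S) (ι (MonoidAlgebra.of k G g)) ^ e = 1
    rw [← TDAux2.actL_pow, ← map_pow, ← map_pow, Monoid.pow_exponent_eq_one, map_one, map_one]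
    exact TDAux2.actL_one
  have hcomm : ∀ g h : G, T g * T h = T h * T g := by
    intro g h
    rw [hT_def]
    show TDAux2.actL (k := k) (S := S) (ι (MonoidAlgebra.of k G g)) *
        TDAux2.actL (k := k) (S := S) (ι (MonoidAlgebra.of k G h)) = _
    rw [← TDAux2.actL_mul, ← TDAux2.actL_mul, ← map_mul, ← map_mul, ← map_mul, ← map_mul,
      mul_comm g h]
  obtain ⟨W', c, hW', hleW, hinvW, hsc⟩ :=
    TDAux2.simult (S := S) e he hroot T hTe hcomm Finset.univ (TDAux2.wtSub (S := S) R εR) hN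
      (fun g w hw => hNstab g w hw)
  obtain ⟨v, hvW', hv0⟩ : ∃ v : S, v ∈ W' ∧ v ≠ 0 := by
    by_contra hcon
    push_neg at hcon
    apply hW'
    ext x
    simp only [Submodule.mem_bot]
    exact ⟨fun hx => hcon x hx, fun hx => hx ▸ W'.zero_mem⟩
  have hGv : ∀ g : G, ι (MonoidAlgebra.of k G g) • v = c g • v := by
    intro g
    exact hsc g (Finset.mem_univ g) v hvW'
  have hRv : ∀ y : R, y ∈ RingHom.ker εR.toRingHom → (y : Λ) • v = 0 :=
    fun y hy => (hleW hvW') y hy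
  -- multiplicativity and invertibility of the eigenvalue function
  have hcmul : ∀ g h : G, c (g * h) = c g * c h := by
    intro g h
    have h1 : ι (MonoidAlgebra.of k G (g * h)) • v = c (g * h) • v := hGv (g * h)
    have h2 : ι (MonoidAlgebra.of k G (g * h)) • v = (c g * c h) • v := by
      rw [map_mul, map_mul, mul_smul, hGv h, smul_comm (ι (MonoidAlgebra.of k G g)) (c h) v,
        hGv g, smul_smul, mul_comm (c h) (c g)]
    exact TDAux.smul_cancel hv0 (h1.symm.trans h2)
  have hc1 : c 1 = 1 := by
    have h1 : ι (MonoidAlgebra.of k G 1) • v = c 1 • v := hGv 1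
    rw [map_one, map_one, one_smul] at h1
    have h2 : c 1 • v = (1 : k) • v := by rw [one_smul]; exact h1.symm
    exact TDAux.smul_cancel hv0 h2
  have hcne : ∀ g, c g ≠ 0 := by
    intro g h0
    have h1 : c (g * g⁻¹) = c g * c g⁻¹ := hcmul g g⁻¹
    rw [mul_inv_cancel, hc1, h0, zero_mul] at h1
    exact one_ne_zero h1
  set lam : G →* kˣ :=
    { toFun := fun g => Units.mk0 (c g) (hcne g),
      map_one' := Units.ext (by simp [hc1]),
      map_mul' := fun g h => Units.ext (by simp [hcmul g h]) } with hlam_def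
  have hGvlam : ∀ g : G, ι (MonoidAlgebra.of k G g) • v = ((lam g : kˣ) : k) • v := fun g => hGv g
  -- the kernel of χ_B(lam) annihilates v
  have hχv := TDAux2.chiAct (S := S) ι R B εR hB (χB lam) (fun g => ((lam g : kˣ) : k))
    (fun g hg => hχB_G lam g hg) (fun y hy => hχB_R lam y hy) v hRv hGvlam
  have hle : Ideal.span ((Subalgebra.val B) '' (RingHom.ker (χB lam).toRingHom : Set B)) ≤
      LinearMap.ker (LinearMap.toSpanSingleton Λ S v) := by
    rw [Ideal.span_le]
    rintro z ⟨b, hb, rfl⟩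
    rw [SetLike.mem_coe, LinearMap.mem_ker, LinearMap.toSpanSingleton_apply]
    have h2 := hχv ((Subalgebra.val B) b) b.2
    rw [h2]
    have hb0 : χB lam b = 0 := by simpa [RingHom.mem_ker] using hb
    rw [show (⟨(Subalgebra.val B) b, b.2⟩ : B) = b from rfl, hb0, zero_smul]
  refine ⟨lam, ⟨Submodule.liftQ _ (LinearMap.toSpanSingleton Λ S v) hle, ?_⟩, ?_⟩
  · -- surjectivity
    intro s
    have hsp : Submodule.span Λ {v} = ⊤ := by
      rcases eq_bot_or_eq_top (Submodule.span Λ {v}) with h | h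
      · exfalso
        apply hv0
        have hmem := Submodule.mem_span_singleton_self (R := Λ) v
        rw [h] at hmem
        exact (Submodule.mem_bot Λ).mp hmem
      · exact h
    have hs : s ∈ Submodule.span Λ {v} := by rw [hsp]; trivial
    obtain ⟨x, hx⟩ := Submodule.mem_span_singleton.mp hs
    exact ⟨Submodule.Quotient.mk x,
      by rw [Submodule.liftQ_apply, LinearMap.toSpanSingleton_apply]; exact hx⟩
  · -- uniqueness
    rintro lam' ⟨f', hf'⟩
    obtain ⟨v', hv'0, hker'⟩ := TDAux2.extract (S := S) B (χB lam') f' hf' hS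
    have hRv' : ∀ y : R, y ∈ RingHom.ker εR.toRingHom → (y : Λ) • v' = 0 := by
      intro y hy
      have hyB : (y : Λ) ∈ B := TDAux2.R_le_B ι R B hB y
      have hbk : (⟨(y : Λ), hyB⟩ : B) ∈ RingHom.ker (χB lam').toRingHom := by
        rw [RingHom.mem_ker]
        show χB lam' ⟨(y : Λ), hyB⟩ = 0
        rw [hχB_R lam' y hyB]
        simpa [RingHom.mem_ker] using hy
      exact hker' _ hbk
    have hGv' : ∀ g : G, ι (MonoidAlgebra.of k G g) • v' = ((lam' g : kˣ) : k) • v' := by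
      intro g
      have hgB : ι (MonoidAlgebra.of k G g) ∈ B := TDAux2.range_le_B ι R B hB _
      have haB : algebraMap k Λ ((lam' g : kˣ) : k) ∈ B := B.algebraMap_mem _
      have hsB : ι (MonoidAlgebra.of k G g) - algebraMap k Λ ((lam' g : kˣ) : k) ∈ B :=
        sub_mem hgB haB
      have hbk : (⟨_, hsB⟩ : B) ∈ RingHom.ker (χB lam').toRingHom := by
        rw [RingHom.mem_ker]
        show χB lam' ⟨_, hsB⟩ = 0
        have hco : (⟨ι (MonoidAlgebra.of k G g) - algebraMap k Λ ((lam' g : kˣ) : k), hsB⟩ : B)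
            = ⟨ι (MonoidAlgebra.of k G g), hgB⟩ - algebraMap k B ((lam' g : kˣ) : k) := by
          apply Subtype.ext
          simp [Subalgebra.coe_algebraMap]
        rw [hco, map_sub, hχB_G lam' g hgB, AlgHom.commutes]
        simp
      have h0 := hker' _ hbk
      have h1 : (ι (MonoidAlgebra.of k G g) - algebraMap k Λ ((lam' g : kˣ) : k)) • v' = 0 := h0
      rw [sub_smul, algebraMap_smul, sub_eq_zero] at h1
      exact h1
    exact TDAux2.compare (S := S) ι L R εL εR hTri hS hLnil hII_L lam' lam v' v hv'0 hv0
      hRv' hGv' hRv hGvlam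
end

section
/- Let p = char k > 0 and let q ∈ kˣ have order m₀, with m = pᵉ·m₀ for some e ≥ 0. Then in the braided tensor algebra T(kv) with braiding v ⊗ v ↦ q v ⊗ v, the element vᵐ is primitive. Hence k[v]/(vᵐ) is a finite-dimensional pre-Nichols algebra of dimension m. -/
namespace Stmt14Aux
variable {k : Type} [Field k]

/-- Gaussian binomial coefficients in `k`, via the `q`-Pascal recursion. -/
def qc (q : k) : ℕ → ℕ → k
  | 0, 0 => 1
  | 0, _+1 => 0
  | n+1, 0 => qc q n 0
  | n+1, i+1 => qc q n i + q ^ (i+1) * qc q n (i+1)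

variable (q : k)

lemma qc_zero (n : ℕ) : qc q n 0 = 1 := by
  induction n with
  | zero => rfl
  | succ n ih => simpa [qc] using ih

lemma qc_of_lt (n : ℕ) : ∀ i : ℕ, n < i → qc q n i = 0 := by
  induction n with
  | zero =>
    intro i h
    match i with
    | j+1 => rfl
  | succ n ih =>
    intro i h
    match i, h with
    | j+1, h =>
      rw [qc, ih j (by omega), ih (j+1) (by omega)]; ring

lemma qc_self (n : ℕ) : qc q n n = 1 := by
  induction n with
  | zero => rfl
  | succ n ih => rw [qc, ih, qc_of_lt q n (n+1) (by omega)]; ring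

/-- The second `q`-Pascal identity. -/
lemma qc_pascal2 (n : ℕ) : ∀ i : ℕ, qc q (n+1) (i+1) = q ^ (n-i) * qc q n i + qc q n (i+1) := by
  induction n with
  | zero =>
    rintro (_|i)
    · simp [qc]
    · simp [qc]
  | succ n ih =>
    rintro (_|j)
    · simp only [Nat.sub_zero]
      have d1 : qc q (n+2) 1 = qc q (n+1) 0 + q^1 * qc q (n+1) 1 := rfl
      have d2 : qc q (n+1) 1 = qc q n 0 + q^1 * qc q n 1 := rfl
      have z1 : qc q (n+1) 0 = 1 := qc_zero q _
      have z2 : qc q n 0 = 1 := qc_zero q _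
      have i0 := ih 0
      simp only [Nat.sub_zero] at i0
      linear_combination d1 + q * i0 - d2 + (q^(n+1)-1) * z2 - (q^(n+1)-1) * z1
    · rcases le_or_gt n j with hnj | hjn
      · rw [show qc q (n+2) (j+2) = qc q (n+1) (j+1) + q^(j+2) * qc q (n+1) (j+2) from rfl,
          qc_of_lt q (n+1) (j+2) (by omega), show n+1-(j+1) = 0 from by omega]
        ring
      · have h2 : q^(j+2) * q^(n-(j+1)) = q^(n+1) := by
          rw [← pow_add]; congr 1; omega
        have h2' : q^(n-j) * q^(j+1) = q^(n+1) := by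
          rw [← pow_add]; congr 1; omega
        have d1 : qc q (n+2) (j+2) = qc q (n+1) (j+1) + q^(j+2) * qc q (n+1) (j+2) := rfl
        have d2 : qc q (n+1) (j+1) = qc q n j + q^(j+1) * qc q n (j+1) := rfl
        have d3 : qc q (n+1) (j+2) = qc q n (j+1) + q^(j+2) * qc q n (j+2) := rfl
        have e4 : n+1-(j+1) = n-j := by omega
        rw [e4]
        linear_combination d1 + ih j + q^(j+2) * ih (j+1) - q^(n-j) * d2 - d3
          + qc q n (j+1) * (h2 - h2')

/-- Vanishing of middle Gaussian binomials at a root of unity of exact order `m₀`. -/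
lemma qc_eq_zero (m₀ : ℕ) (hord : orderOf q = m₀) :
    ∀ i : ℕ, 0 < i → i < m₀ → qc q m₀ i = 0 := by
  have hq1 : q ^ m₀ = 1 := hord ▸ pow_orderOf_eq_one q
  have hqn : ∀ j : ℕ, 0 < j → j < m₀ → q ^ j ≠ 1 := by
    intro j hj hjm hq
    have := orderOf_dvd_of_pow_eq_one hq
    rw [hord] at this
    exact absurd (Nat.le_of_dvd hj this) (by omega)
  intro i
  induction i with
  | zero => omega
  | succ j ih =>
    intro _ hjm
    have d1 : qc q (m₀+1) (j+1) = qc q m₀ j + q^(j+1) * qc q m₀ (j+1) := by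
      simp [qc]
    have d2 := qc_pascal2 q m₀ j
    have key : (1 - q^(m₀-j)) * qc q m₀ j = (1 - q^(j+1)) * qc q m₀ (j+1) := by
      linear_combination d2 - d1
    have hz : (1 - q^(m₀-j)) * qc q m₀ j = 0 := by
      rcases Nat.eq_zero_or_pos j with rfl | hj
      · rw [Nat.sub_zero, hq1]; ring
      · rw [ih hj (by omega)]; ring
    have hne : (1 : k) - q^(j+1) ≠ 0 := by
      intro h
      exact hqn (j+1) (by omega) hjm (by linear_combination -h)
    rcases mul_eq_zero.mp ((hz.symm.trans key).symm) with h | h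
    · exact absurd h hne
    · exact h

section ring
variable {A : Type} [Ring A] [Algebra k A] (x y : A)
  (hcomm : y * x = q • (x * y))

include hcomm in
lemma y_mul_xpow (i : ℕ) : y * x ^ i = q ^ i • (x ^ i * y) := by
  induction i with
  | zero => simp
  | succ i ih =>
    calc y * x ^ (i+1) = (y * x) * x ^ i := by rw [pow_succ', mul_assoc]
    _ = q • ((x * y) * x ^ i) := by rw [hcomm, smul_mul_assoc]
    _ = q • (x * (y * x ^ i)) := by rw [mul_assoc]
    _ = q • (x * (q ^ i • (x ^ i * y))) := by rw [ih]
    _ = (q * q ^ i) • (x * (x ^ i * y)) := by rw [mul_smul_comm, smul_smul]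
    _ = q ^ (i+1) • (x ^ (i+1) * y) := by rw [pow_succ', pow_succ', mul_assoc]

include hcomm in
lemma ypow_mul_xpow (n i : ℕ) : y ^ n * x ^ i = (q ^ (n * i)) • (x ^ i * y ^ n) := by
  induction n with
  | zero => simp
  | succ n ih =>
    calc y ^ (n+1) * x ^ i = y * (y ^ n * x ^ i) := by rw [pow_succ', mul_assoc]
    _ = y * (q ^ (n*i) • (x ^ i * y ^ n)) := by rw [ih]
    _ = q ^ (n*i) • ((y * x ^ i) * y ^ n) := by rw [mul_smul_comm, mul_assoc]
    _ = q ^ (n*i) • ((q ^ i • (x ^ i * y)) * y ^ n) := by rw [y_mul_xpow q x y hcomm]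
    _ = (q ^ (n*i) * q ^ i) • (x ^ i * (y * y ^ n)) := by
        rw [smul_mul_assoc, smul_smul, mul_assoc]
    _ = (q ^ ((n+1) * i)) • (x ^ i * y ^ (n+1)) := by
        rw [← pow_add, pow_succ']
        congr 2
        ring

include hcomm in
/-- The noncommutative `q`-binomial theorem. -/
lemma expand (n : ℕ) :
    (x + y) ^ n = ∑ i ∈ Finset.range (n+1), qc q n i • (x ^ i * y ^ (n-i)) := by
  induction n with
  | zero => simp [qc]
  | succ n ih =>
    rw [pow_succ', ih, add_mul, Finset.mul_sum, Finset.mul_sum]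
    have hx : ∀ i ∈ Finset.range (n+1),
        x * (qc q n i • (x ^ i * y ^ (n-i))) = qc q n i • (x ^ (i+1) * y ^ (n-i)) := by
      intro i _
      rw [mul_smul_comm, ← mul_assoc, ← pow_succ']
    have hy : ∀ i ∈ Finset.range (n+1),
        y * (qc q n i • (x ^ i * y ^ (n-i)))
          = (q ^ i * qc q n i) • (x ^ i * y ^ (n+1-i)) := by
      intro i hi
      have hi' : i ≤ n := Nat.lt_succ_iff.mp (Finset.mem_range.mp hi)
      rw [mul_smul_comm, ← mul_assoc, y_mul_xpow q x y hcomm, smul_mul_assoc, smul_smul,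
        mul_assoc, ← pow_succ']
      rw [show n - i + 1 = n + 1 - i from by omega, mul_comm (qc q n i) (q ^ i)]
    rw [Finset.sum_congr rfl hx, Finset.sum_congr rfl hy,
      Finset.sum_range_succ' (fun i => qc q (n+1) i • (x ^ i * y ^ (n+1-i))) (n+1)]
    simp only [Nat.succ_sub_succ, Nat.sub_zero, pow_zero, one_mul, qc_zero, one_smul]
    have hq' : ∀ i ∈ Finset.range (n+1),
        qc q (n+1) (i+1) • (x ^ (i+1) * y ^ (n-i))
          = qc q n i • (x ^ (i+1) * y ^ (n-i))
            + (q ^ (i+1) * qc q n (i+1)) • (x ^ (i+1) * y ^ (n-i)) := by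
      intro i _
      rw [show qc q (n+1) (i+1) = qc q n i + q^(i+1) * qc q n (i+1) from rfl, add_smul]
    rw [Finset.sum_congr rfl hq', Finset.sum_add_distrib]
    rw [Finset.sum_range_succ' (fun i => (q ^ i * qc q n i) • (x ^ i * y ^ (n+1-i))) n,
      Finset.sum_range_succ (fun i => (q ^ (i+1) * qc q n (i+1)) • (x ^ (i+1) * y ^ (n-i))) n]
    simp only [Nat.succ_sub_succ, Nat.sub_zero, Nat.sub_self, pow_zero, one_mul, qc_zero,
      one_smul, qc_of_lt q n (n+1) (Nat.lt_succ_self n), mul_zero, zero_smul]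
    abel

end ring
end Stmt14Aux

/-- In characteristic `p > 0`, if `q ∈ kˣ` has multiplicative order `m₀` and
`m = pᵉ·m₀`, then in the braided tensor algebra `T(kv)` with braiding `v ⊗ v ↦ q v ⊗ v`
the element `vᵐ` is primitive — abstractly, `q`-commuting elements `x = v ⊗ 1`,
`y = 1 ⊗ v` satisfy `(x+y)ᵐ = xᵐ + yᵐ` — and hence `k[v]/(vᵐ)` is a finite-dimensional
pre-Nichols algebra of dimension `m`. -/
theorem stmt14 (k A : Type) [Field k] [Ring A] [Algebra k A]
    (p : ℕ) [hp : Fact p.Prime] [CharP k p]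
    (q : k) (hq : q ≠ 0) (m₀ : ℕ) (hord : orderOf q = m₀) (hm₀ : 0 < m₀)
    (e : ℕ) (m : ℕ) (hm : m = p ^ e * m₀)
    (x y : A) (hcomm : y * x = q • (x * y)) :
    (x + y) ^ m = x ^ m + y ^ m ∧
    Module.finrank k
      (Polynomial k ⧸ Ideal.span {(Polynomial.X : Polynomial k) ^ m}) = m := by
  constructor
  · have hq1 : q ^ m₀ = 1 := hord ▸ pow_orderOf_eq_one q
    have key : (x + y) ^ m₀ = x ^ m₀ + y ^ m₀ := by
      rw [Stmt14Aux.expand q x y hcomm m₀, Finset.sum_range_succ]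
      have h1 : ∑ i ∈ Finset.range m₀, Stmt14Aux.qc q m₀ i • (x ^ i * y ^ (m₀-i)) = y ^ m₀ := by
        rw [Finset.sum_eq_single_of_mem 0 (Finset.mem_range.mpr hm₀)]
        · simp [Stmt14Aux.qc_zero]
        · intro i hi hne
          rw [Stmt14Aux.qc_eq_zero q m₀ hord i (Nat.pos_of_ne_zero hne)
            (Finset.mem_range.mp hi), zero_smul]
      rw [h1, Stmt14Aux.qc_self, Nat.sub_self, pow_zero, mul_one, one_smul, add_comm]
    have hcpow : Commute (x ^ m₀) (y ^ m₀) := by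
      have := Stmt14Aux.ypow_mul_xpow q x y hcomm m₀ m₀
      rw [pow_mul, hq1, one_pow, one_smul] at this
      exact this.symm
    rcases subsingleton_or_nontrivial A with hA | hA
    · exact Subsingleton.elim _ _
    · haveI : CharP A p := charP_of_injective_algebraMap (algebraMap k A).injective p
      rw [hm, mul_comm, pow_mul, pow_mul, pow_mul, key,
        add_pow_char_pow_of_commute p e hcpow]
  · have h : (Polynomial.X : Polynomial k) ^ m ≠ 0 := pow_ne_zero _ Polynomial.X_ne_zero
    have := (AdjoinRoot.powerBasis h).finrank
    simp only [AdjoinRoot.powerBasis_dim, Polynomial.natDegree_X_pow] at this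
    exact this
end
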